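/- arXiv:1407.3619 — 3 statements merged into one kernel-verified Lean document; each statement's English description precedes it below -/
import Mathlib

section
/- Let U be an r-dimensional subspace of ℝ^d with coherence μ(U) ≤ μ₀, let Ũ be a subspace of U, and let x ∈ U with x ∉ Ũ. Let Ω be a list of m indices drawn independently and uniformly at random with replacement from [d]. If m ≥ 32·r·μ₀·log²(2r/δ), then with probability at least 1 − 4δ one has ‖x_Ω − P_{Ũ_Ω} x_Ω‖₂ > 0. -/
open Matrix

/- Probability of an event under the uniform distribution on a finite type. -/
open scoped Classical in
noncomputable def unifProb {α : Type*} [Fintype α] (P : α → Prop) : ℝ :=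
  (Finset.univ.filter fun a => P a).card / Fintype.card α

/-- Squared Euclidean norm of a vector in ℝ^d. -/
def sq2 {d : ℕ} (x : Fin d → ℝ) : ℝ := ∑ i, x i ^ 2

/-- Vector coherence μ(v) = d·‖v‖∞²/‖v‖₂². -/
noncomputable def vecCoh {d : ℕ} (v : Fin d → ℝ) : ℝ :=
  ((d : ℝ) * ⨆ i, v i ^ 2) / sq2 v

/-- Coherence μ(U) = (d/r)·max_i ‖P_U e_i‖₂² of the column span of a d×r matrix U with
orthonormal columns; here ‖P_U e_i‖₂² = ∑ k (U i k)². -/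
noncomputable def matCoh {d r : ℕ} (U : Matrix (Fin d) (Fin r) ℝ) : ℝ :=
  ((d : ℝ) / r) * ⨆ i : Fin d, ∑ k, U i k ^ 2

/-- ‖y_Ω − P_{U_Ω} y_Ω‖₂²: squared norm of the residual of the orthogonal projection of the
subsampled vector y_Ω onto the column span of the subsampled matrix U_Ω. -/
noncomputable def projResidSq {d r m : ℕ} (U : Matrix (Fin d) (Fin r) ℝ)
    (y : Fin d → ℝ) (Ω : Fin m → Fin d) : ℝ :=
  let yΩ : EuclideanSpace ℝ (Fin m) := WithLp.toLp 2 (fun j => y (Ω j))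
  let S : Submodule ℝ (EuclideanSpace ℝ (Fin m)) :=
    Submodule.span ℝ (Set.range fun k : Fin r => (WithLp.toLp 2 (fun j => U (Ω j) k) : EuclideanSpace ℝ (Fin m)))
  ‖yΩ - (S.orthogonalProjection yΩ : EuclideanSpace ℝ (Fin m))‖ ^ 2

/-- The row-subsampled matrix U_Ω whose j-th row is the Ω(j)-th row of U. -/
def subMat {d r m : ℕ} (U : Matrix (Fin d) (Fin r) ℝ) (Ω : Fin m → Fin d) :
    Matrix (Fin m) (Fin r) ℝ :=
  Matrix.of fun j k => U (Ω j) k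

/-- Spectral (ℓ2 operator) norm of a matrix. -/
noncomputable def specNorm {p q : ℕ} (M : Matrix (Fin p) (Fin q) ℝ) : ℝ :=
  ‖(Matrix.toEuclideanLin M).toContinuousLinearMap‖

set_option maxHeartbeats 1000000

noncomputable section Aux
open scoped Classical

variable {d r : ℕ}

def rowU (U : Matrix (Fin d) (Fin r) ℝ) (i : Fin d) : EuclideanSpace ℝ (Fin r) := WithLp.toLp 2 (fun k => U i k)

def Wspan (U : Matrix (Fin d) (Fin r) ℝ) {j : ℕ} (g : Fin j → Fin d) :
    Submodule ℝ (EuclideanSpace ℝ (Fin r)) :=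
  Submodule.span ℝ (Set.range fun t => rowU U (g t))

lemma sumsq_mulVec {U : Matrix (Fin d) (Fin r) ℝ} (hU : Uᵀ * U = 1) (v : Fin r → ℝ) :
    ∑ i, (∑ k, v k * U i k) ^ 2 = ∑ k, v k ^ 2 := by
  have h : ∀ i : Fin d, (∑ k, v k * U i k) ^ 2
      = ∑ k, ∑ k', v k * v k' * (U i k * U i k') := by
    intro i
    rw [sq, Finset.sum_mul_sum]
    apply Finset.sum_congr rfl; intro k _
    apply Finset.sum_congr rfl; intro k' _
    ring
  rw [Finset.sum_congr rfl fun i _ => h i]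
  rw [Finset.sum_comm]
  have h2 : ∀ k : Fin r, ∑ i : Fin d, ∑ k', v k * v k' * (U i k * U i k')
      = ∑ k', v k * v k' * ((Uᵀ * U) k k') := by
    intro k
    rw [Finset.sum_comm]
    apply Finset.sum_congr rfl; intro k' _
    rw [Matrix.mul_apply, Finset.mul_sum]
    apply Finset.sum_congr rfl; intro i _
    simp [Matrix.transpose_apply]
  rw [Finset.sum_congr rfl fun k _ => h2 k]
  rw [hU]
  apply Finset.sum_congr rfl; intro k _
  rw [Finset.sum_eq_single k]
  · simp only [Matrix.one_apply_eq, mul_one]; ring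
  · intro k' _ hk'; simp [Matrix.one_apply, (Ne.symm hk')]
  · simp

lemma row_normsq_le {U : Matrix (Fin d) (Fin r) ℝ} {μ₀ : ℝ} (hd : 0 < d) (hr : 0 < r)
    (hcoh : matCoh U ≤ μ₀) (i : Fin d) : ∑ k, U i k ^ 2 ≤ r * μ₀ / d := by
  have hd' : (0:ℝ) < d := by exact_mod_cast hd
  have hr' : (0:ℝ) < r := by exact_mod_cast hr
  have hb : BddAbove (Set.range fun i : Fin d => ∑ k, U i k ^ 2) :=
    (Set.finite_range _).bddAbove
  have h1 : (∑ k, U i k ^ 2) ≤ ⨆ i : Fin d, ∑ k, U i k ^ 2 := le_ciSup hb i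
  have h2 : ((d : ℝ) / r) * (⨆ i : Fin d, ∑ k, U i k ^ 2) ≤ μ₀ := hcoh
  rw [div_mul_eq_mul_div, div_le_iff₀ hr'] at h2
  rw [le_div_iff₀ hd']
  nlinarith [h1, h2]

lemma one_le_mu0 {U : Matrix (Fin d) (Fin r) ℝ} {μ₀ : ℝ} (hd : 0 < d) (hr : 0 < r)
    (hU : Uᵀ * U = 1) (hcoh : matCoh U ≤ μ₀) : 1 ≤ μ₀ := by
  have hd' : (0:ℝ) < d := by exact_mod_cast hd
  have hr' : (0:ℝ) < r := by exact_mod_cast hr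
  have htr : ∑ i : Fin d, ∑ k : Fin r, U i k ^ 2 = r := by
    rw [Finset.sum_comm]
    have : ∀ k : Fin r, ∑ i : Fin d, U i k ^ 2 = 1 := by
      intro k
      have := congrFun (congrFun hU k) k
      simp only [Matrix.mul_apply, Matrix.transpose_apply, Matrix.one_apply_eq] at this
      rw [← this]
      apply Finset.sum_congr rfl; intro i _; ring
    simp [this]
  have hex : ∃ i : Fin d, (r : ℝ) / d ≤ ∑ k, U i k ^ 2 := by
    by_contra hcon
    push_neg at hcon
    have hlt : ∑ i : Fin d, ∑ k : Fin r, U i k ^ 2 < ∑ i : Fin d, (r:ℝ)/d := by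
      apply Finset.sum_lt_sum_of_nonempty
      · exact Finset.univ_nonempty_iff.mpr ⟨⟨0, hd⟩⟩
      · intro i _; exact hcon i
    rw [htr] at hlt
    rw [Finset.sum_const, Finset.card_univ, Fintype.card_fin, nsmul_eq_mul,
      mul_comm, div_mul_cancel₀ _ (ne_of_gt hd')] at hlt
    exact lt_irrefl _ hlt
  obtain ⟨i, hi⟩ := hex
  have h2 := hi.trans (row_normsq_le (μ₀ := μ₀) hd hr hcoh i)
  rw [div_le_div_iff₀ hd' hd'] at h2
  nlinarith [h2, mul_pos hr' hd']

lemma count_outside {U : Matrix (Fin d) (Fin r) ℝ} {μ₀ : ℝ} (hd : 0 < d) (hr : 0 < r)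
    (hU : Uᵀ * U = 1) (hcoh : matCoh U ≤ μ₀)
    (W : Submodule ℝ (EuclideanSpace ℝ (Fin r))) :
    (d : ℝ) * ((r : ℝ) - (Module.finrank ℝ W)) / ((r:ℝ) * μ₀)
      ≤ ((Finset.univ.filter fun i : Fin d => rowU U i ∉ W).card : ℝ) := by
  have hd' : (0:ℝ) < d := by exact_mod_cast hd
  have hr' : (0:ℝ) < r := by exact_mod_cast hr
  have hμ1 : (1:ℝ) ≤ μ₀ := one_le_mu0 hd hr hU hcoh
  have hμ0 : (0:ℝ) < μ₀ := lt_of_lt_of_le one_pos hμ1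
  set s := Module.finrank ℝ W with hs
  set n := Module.finrank ℝ ↥Wᗮ with hn
  have hsn : s + n = r := by
    have := Submodule.finrank_add_finrank_orthogonal (K := W)
    rwa [finrank_euclideanSpace_fin] at this
  set B := stdOrthonormalBasis ℝ ↥Wᗮ with hB
  set a : Fin n → EuclideanSpace ℝ (Fin r) := fun t => (B t : EuclideanSpace ℝ (Fin r)) with haa
  have ha : Orthonormal ℝ a := by
    rw [orthonormal_iff_ite]
    intro t t'
    have h := B.orthonormal
    rw [orthonormal_iff_ite] at h
    simpa [haa, ← Submodule.coe_inner] using h t t'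
  have hinner : ∀ (t : Fin n) (i : Fin d),
      (inner ℝ (a t) (rowU U i) : ℝ) = ∑ k, a t k * U i k := by
    intro t i
    simp [PiLp.inner_apply, rowU, RCLike.inner_apply, conj_trivial]
    exact Finset.sum_congr rfl fun _ _ => mul_comm _ _
  set c : Fin d → ℝ := fun i => ∑ t, (inner ℝ (a t) (rowU U i) : ℝ)^2 with hc
  have hnorm1 : ∀ t : Fin n, ∑ k, (a t k)^2 = 1 := by
    intro t
    have h := ha
    rw [orthonormal_iff_ite] at h
    have h1 := h t t
    simp only [if_true, eq_self_iff_true] at h1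
    rw [← h1, real_inner_self_eq_norm_sq, EuclideanSpace.norm_sq_eq]
    simp [Real.norm_eq_abs, sq_abs]
  have hsum : ∑ i, c i = n := by
    rw [hc, Finset.sum_comm]
    have : ∀ t : Fin n, ∑ i, (inner ℝ (a t) (rowU U i) : ℝ)^2 = 1 := by
      intro t
      calc ∑ i, (inner ℝ (a t) (rowU U i) : ℝ)^2
          = ∑ i, (∑ k, a t k * U i k)^2 := by
            apply Finset.sum_congr rfl; intro i _; rw [hinner]
        _ = ∑ k, (a t k)^2 := sumsq_mulVec hU _
        _ = 1 := hnorm1 t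
    rw [Finset.sum_congr rfl (fun t _ => this t)]
    simp
  have hbound : ∀ i, c i ≤ r * μ₀ / d := by
    intro i
    have hb := ha.sum_inner_products_le (rowU U i) (s := Finset.univ)
    have hnx : ‖rowU U i‖^2 = ∑ k, U i k ^2 := by
      rw [EuclideanSpace.norm_sq_eq]
      simp [rowU, Real.norm_eq_abs, sq_abs]
    have : c i ≤ ‖rowU U i‖^2 := by
      rw [hc]
      calc ∑ t, (inner ℝ (a t) (rowU U i) : ℝ)^2
          = ∑ t, ‖(inner ℝ (a t) (rowU U i) : ℝ)‖^2 := by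
            apply Finset.sum_congr rfl; intro t _
            rw [Real.norm_eq_abs, sq_abs]
        _ ≤ ‖rowU U i‖^2 := hb
    exact this.trans (by rw [hnx]; exact row_normsq_le hd hr hcoh i)
  have hzero : ∀ i, rowU U i ∈ W → c i = 0 := by
    intro i hi
    rw [hc]
    apply Finset.sum_eq_zero
    intro t _
    have : (inner ℝ (a t) (rowU U i) : ℝ) = 0 :=
      Submodule.inner_left_of_mem_orthogonal hi (B t).2
    rw [this]; ring
  set F := Finset.univ.filter fun i : Fin d => rowU U i ∉ W with hF
  have hFs : (n:ℝ) ≤ F.card * (r * μ₀ / d) := by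
    have h1 : ∑ i ∈ F, c i = ∑ i, c i := by
      apply Finset.sum_filter_of_ne
      intro i _ hci
      intro hmem
      exact hci (hzero i hmem)
    have h2 : ∑ i ∈ F, c i ≤ F.card * (r * μ₀ / d) := by
      have := Finset.sum_le_card_nsmul F c (r * μ₀ / d) (fun i _ => hbound i)
      simpa [nsmul_eq_mul] using this
    rw [h1, hsum] at h2
    exact h2
  have hrs : (r:ℝ) - s = n := by
    have : (s:ℝ) + n = r := by exact_mod_cast hsn
    linarith
  rw [hrs, div_le_iff₀ (by positivity)]
  have h3 := mul_le_mul_of_nonneg_right hFs (le_of_lt hd')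
  calc (d:ℝ) * n = (n:ℝ) * d := by ring
    _ ≤ (F.card * (r * μ₀ / d)) * d := h3
    _ = F.card * (r * μ₀) := by field_simp

/-- coupon probability -/
noncomputable def qq (r : ℕ) (μ₀ : ℝ) (s : ℕ) : ℝ := ((r:ℝ) - s) / ((r:ℝ) * μ₀)

def Qcnt (U : Matrix (Fin d) (Fin r) ℝ) (j s : ℕ) : ℕ :=
  (Finset.univ.filter fun g : Fin j → Fin d => Module.finrank ℝ (Wspan U g) < s).card

lemma card_filter_cons {α : Type*} [Fintype α] {j : ℕ} (P : (Fin (j+1) → α) → Prop)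
    [DecidablePred P] [∀ g₀ : Fin j → α, DecidablePred fun i => P (Fin.cons i g₀)] :
    (Finset.univ.filter P).card
      = ∑ g₀ : Fin j → α, (Finset.univ.filter fun i : α => P (Fin.cons i g₀)).card := by
  classical
  rw [Finset.card_filter]
  rw [← Equiv.sum_comp (Fin.consEquiv (fun _ => α)) (fun g => if P g then 1 else 0)]
  rw [Fintype.sum_prod_type]
  rw [Finset.sum_comm]
  apply Finset.sum_congr rfl; intro g₀ _
  rw [Finset.card_filter]
  apply Finset.sum_congr rfl; intro i _
  exact if_congr Iff.rfl rfl rfl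

lemma Wspan_cons (U : Matrix (Fin d) (Fin r) ℝ) {j : ℕ} (g₀ : Fin j → Fin d) (i : Fin d) :
    Wspan U (Fin.cons i g₀) = (Submodule.span ℝ {rowU U i}) ⊔ Wspan U g₀ := by
  unfold Wspan
  have h1 : (fun t => rowU U ((Fin.cons i g₀ : Fin (j+1) → Fin d) t)) = Fin.cons (rowU U i) (fun t => rowU U (g₀ t)) := by
    funext t
    induction t using Fin.cases with
    | zero => simp
    | succ t' => simp
  rw [h1]
  rw [Fin.range_cons]
  rw [Submodule.span_insert]

lemma Wspan_le_cons (U : Matrix (Fin d) (Fin r) ℝ) {j : ℕ} (g₀ : Fin j → Fin d) (i : Fin d) :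
    Wspan U g₀ ≤ Wspan U (Fin.cons i g₀) := by
  rw [Wspan_cons]; exact le_sup_right

lemma finrank_cons_mem {U : Matrix (Fin d) (Fin r) ℝ} {j : ℕ} {g₀ : Fin j → Fin d} {i : Fin d}
    (h : Module.finrank ℝ (Wspan U (Fin.cons i g₀)) ≤ Module.finrank ℝ (Wspan U g₀)) :
    rowU U i ∈ Wspan U g₀ := by
  have hle := Wspan_le_cons U g₀ i
  have heq : Wspan U g₀ = Wspan U (Fin.cons i g₀) :=
    Submodule.eq_of_le_of_finrank_le hle h
  rw [heq, Wspan_cons]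
  exact Submodule.mem_sup_left (Submodule.mem_span_singleton_self _)

lemma Qcnt_mono_s (U : Matrix (Fin d) (Fin r) ℝ) (j : ℕ) {s s' : ℕ} (h : s ≤ s') :
    Qcnt U j s ≤ Qcnt U j s' := by
  apply Finset.card_le_card
  apply Finset.monotone_filter_right
  intro g _ hg
  exact lt_of_lt_of_le hg h

lemma Qcnt_le (U : Matrix (Fin d) (Fin r) ℝ) (j s : ℕ) : Qcnt U j s ≤ d ^ j := by
  calc Qcnt U j s ≤ Finset.univ.card := Finset.card_filter_le _ _
    _ = d ^ j := by simp [Finset.card_univ]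

lemma Qcnt_zero (U : Matrix (Fin d) (Fin r) ℝ) (j : ℕ) : Qcnt U j 0 = 0 := by
  unfold Qcnt
  rw [Finset.card_eq_zero, Finset.filter_eq_empty_iff]
  intro g _
  omega

lemma Qcnt_step {U : Matrix (Fin d) (Fin r) ℝ} {μ₀ : ℝ} (hd : 0 < d) (hr : 0 < r)
    (hU : Uᵀ * U = 1) (hcoh : matCoh U ≤ μ₀) (j s : ℕ) (hs : s < r) :
    (Qcnt U (j+1) (s+1) : ℝ) ≤ ((d:ℝ) - d * qq r μ₀ s) * Qcnt U j (s+1)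
      + ((d:ℝ) * qq r μ₀ s) * Qcnt U j s := by
  have key : ∀ g₀ : Fin j → Fin d,
      ((Finset.univ.filter fun i : Fin d =>
          Module.finrank ℝ (Wspan U (Fin.cons i g₀)) < s+1).card : ℝ)
        ≤ ((d:ℝ) - d * qq r μ₀ s) *
            (if Module.finrank ℝ (Wspan U g₀) < s + 1 then (1:ℝ) else 0)
          + ((d:ℝ) * qq r μ₀ s) *
            (if Module.finrank ℝ (Wspan U g₀) < s then (1:ℝ) else 0) := by
    intro g₀
    by_cases h1 : Module.finrank ℝ (Wspan U g₀) < s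
    · -- bound by d
      rw [if_pos (by omega), if_pos h1]
      calc ((Finset.univ.filter fun i : Fin d =>
            Module.finrank ℝ (Wspan U (Fin.cons i g₀)) < s+1).card : ℝ)
          ≤ (Finset.univ.card : ℝ) := by
            exact_mod_cast Finset.card_filter_le _ _
        _ = d := by simp
        _ = ((d:ℝ) - d * qq r μ₀ s) * 1 + ((d:ℝ) * qq r μ₀ s) * 1 := by ring
    by_cases h2 : Module.finrank ℝ (Wspan U g₀) = s
    · -- the interesting case
      rw [if_pos (by omega), if_neg (by omega)]
      have hsub : (Finset.univ.filter fun i : Fin d =>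
            Module.finrank ℝ (Wspan U (Fin.cons i g₀)) < s+1)
          ⊆ Finset.univ.filter fun i : Fin d => rowU U i ∈ Wspan U g₀ := by
        intro i hi
        rw [Finset.mem_filter] at *
        refine ⟨hi.1, ?_⟩
        apply finrank_cons_mem
        omega
      have hout := count_outside hd hr hU hcoh (Wspan U g₀)
      rw [h2] at hout
      have hcompl : ((Finset.univ.filter fun i : Fin d => rowU U i ∈ Wspan U g₀).card : ℝ)
          = (d:ℝ) - ((Finset.univ.filter fun i : Fin d => rowU U i ∉ Wspan U g₀).card : ℝ) := by
        have := Finset.card_filter_add_card_filter_not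
          (s := (Finset.univ : Finset (Fin d)))
          (p := fun i : Fin d => rowU U i ∈ Wspan U g₀)
        simp only [Finset.card_univ, Fintype.card_fin] at this
        push_cast [← this]
        ring
      calc ((Finset.univ.filter fun i : Fin d =>
            Module.finrank ℝ (Wspan U (Fin.cons i g₀)) < s+1).card : ℝ)
          ≤ ((Finset.univ.filter fun i : Fin d => rowU U i ∈ Wspan U g₀).card : ℝ) := by
            exact_mod_cast Finset.card_le_card hsub
        _ ≤ (d:ℝ) - (d:ℝ) * qq r μ₀ s := by
            rw [hcompl]
            have : (d:ℝ) * qq r μ₀ s = (d : ℝ) * ((r : ℝ) - s) / ((r:ℝ) * μ₀) := by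
              unfold qq; ring
            rw [this]
            linarith [hout]
        _ = ((d:ℝ) - d * qq r μ₀ s) * 1 + ((d:ℝ) * qq r μ₀ s) * 0 := by ring
    · -- rank > s : empty
      rw [if_neg (by omega), if_neg (by omega)]
      have hempty : (Finset.univ.filter fun i : Fin d =>
            Module.finrank ℝ (Wspan U (Fin.cons i g₀)) < s+1) = ∅ := by
        rw [Finset.filter_eq_empty_iff]
        intro i _
        have hmono : Module.finrank ℝ (Wspan U g₀)
            ≤ Module.finrank ℝ (Wspan U (Fin.cons i g₀)) :=
          Submodule.finrank_mono (Wspan_le_cons U g₀ i)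
        omega
      rw [hempty]
      simp
  have hrwN : Qcnt U (j+1) (s+1) = ∑ g₀ : Fin j → Fin d, (Finset.univ.filter fun i : Fin d =>
          Module.finrank ℝ (Wspan U (Fin.cons i g₀)) < s+1).card := by unfold Qcnt; exact card_filter_cons _
  have hrw : (Qcnt U (j+1) (s+1) : ℝ)
      = ∑ g₀ : Fin j → Fin d, ((Finset.univ.filter fun i : Fin d =>
          Module.finrank ℝ (Wspan U (Fin.cons i g₀)) < s+1).card : ℝ) := by
    rw [hrwN]; push_cast; rfl
  rw [hrw]
  calc ∑ g₀ : Fin j → Fin d, ((Finset.univ.filter fun i : Fin d =>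
          Module.finrank ℝ (Wspan U (Fin.cons i g₀)) < s+1).card : ℝ)
      ≤ ∑ g₀ : Fin j → Fin d, (((d:ℝ) - d * qq r μ₀ s) *
            (if Module.finrank ℝ (Wspan U g₀) < s + 1 then (1:ℝ) else 0)
          + ((d:ℝ) * qq r μ₀ s) *
            (if Module.finrank ℝ (Wspan U g₀) < s then (1:ℝ) else 0)) :=
        Finset.sum_le_sum (fun g₀ _ => key g₀)
    _ = ((d:ℝ) - d * qq r μ₀ s) * Qcnt U j (s+1) + ((d:ℝ) * qq r μ₀ s) * Qcnt U j s := by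
        rw [Finset.sum_add_distrib, ← Finset.mul_sum, ← Finset.mul_sum]
        unfold Qcnt
        rw [Finset.sum_boole, Finset.sum_boole]
lemma Qcnt_mono_j {U : Matrix (Fin d) (Fin r) ℝ} (j s : ℕ) :
    (Qcnt U (j+1) s : ℝ) ≤ (d:ℝ) * Qcnt U j s := by
  have key : ∀ g₀ : Fin j → Fin d,
      ((Finset.univ.filter fun i : Fin d =>
          Module.finrank ℝ (Wspan U (Fin.cons i g₀)) < s).card : ℝ)
        ≤ (d:ℝ) * (if Module.finrank ℝ (Wspan U g₀) < s then (1:ℝ) else 0) := by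
    intro g₀
    by_cases h1 : Module.finrank ℝ (Wspan U g₀) < s
    · rw [if_pos h1, mul_one]
      calc ((Finset.univ.filter fun i : Fin d =>
            Module.finrank ℝ (Wspan U (Fin.cons i g₀)) < s).card : ℝ)
          ≤ (Finset.univ.card : ℝ) := by exact_mod_cast Finset.card_filter_le _ _
        _ = d := by simp
    · rw [if_neg h1, mul_zero]
      have hempty : (Finset.univ.filter fun i : Fin d =>
            Module.finrank ℝ (Wspan U (Fin.cons i g₀)) < s) = ∅ := by
        rw [Finset.filter_eq_empty_iff]
        intro i _
        have hmono : Module.finrank ℝ (Wspan U g₀)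
            ≤ Module.finrank ℝ (Wspan U (Fin.cons i g₀)) :=
          Submodule.finrank_mono (Wspan_le_cons U g₀ i)
        omega
      rw [hempty]
      simp
  have hrwN : Qcnt U (j+1) s = ∑ g₀ : Fin j → Fin d, (Finset.univ.filter fun i : Fin d =>
          Module.finrank ℝ (Wspan U (Fin.cons i g₀)) < s).card := by unfold Qcnt; exact card_filter_cons _
  have hrw : (Qcnt U (j+1) s : ℝ)
      = ∑ g₀ : Fin j → Fin d, ((Finset.univ.filter fun i : Fin d =>
          Module.finrank ℝ (Wspan U (Fin.cons i g₀)) < s).card : ℝ) := by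
    rw [hrwN]; push_cast; rfl
  rw [hrw]
  calc ∑ g₀ : Fin j → Fin d, ((Finset.univ.filter fun i : Fin d =>
          Module.finrank ℝ (Wspan U (Fin.cons i g₀)) < s).card : ℝ)
      ≤ ∑ g₀ : Fin j → Fin d, (d:ℝ) *
          (if Module.finrank ℝ (Wspan U g₀) < s then (1:ℝ) else 0) :=
        Finset.sum_le_sum (fun g₀ _ => key g₀)
    _ = (d:ℝ) * Qcnt U j s := by
        rw [← Finset.mul_sum]
        unfold Qcnt
        rw [Finset.sum_boole]

noncomputable def betaQ (U : Matrix (Fin d) (Fin r) ℝ) (j s : ℕ) : ℝ :=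
  (Qcnt U j s : ℝ) / (d:ℝ) ^ j

section DP
variable {U : Matrix (Fin d) (Fin r) ℝ} {μ₀ : ℝ}
  (hd : 0 < d) (hr : 0 < r) (hU : Uᵀ * U = 1) (hcoh : matCoh U ≤ μ₀)

include hd

lemma betaQ_nonneg (j s : ℕ) : 0 ≤ betaQ U j s := by
  have hd' : (0:ℝ) < d := by exact_mod_cast hd
  unfold betaQ; positivity

lemma betaQ_le_one (j s : ℕ) : betaQ U j s ≤ 1 := by
  have hd' : (0:ℝ) < (d:ℝ) ^ j := by positivity
  unfold betaQ
  rw [div_le_one hd']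
  calc (Qcnt U j s : ℝ) ≤ ((d ^ j : ℕ) : ℝ) := by exact_mod_cast Qcnt_le U j s
    _ = (d:ℝ)^j := by push_cast; ring

lemma betaQ_zero (j : ℕ) : betaQ U j 0 = 0 := by
  unfold betaQ; rw [Qcnt_zero]; simp

lemma betaQ_mono (j s : ℕ) : betaQ U (j+1) s ≤ betaQ U j s := by
  have hd' : (0:ℝ) < d := by exact_mod_cast hd
  unfold betaQ
  rw [div_le_div_iff₀ (by positivity) (by positivity)]
  have h := Qcnt_mono_j (U := U) j s
  calc (Qcnt U (j+1) s : ℝ) * (d:ℝ)^j ≤ ((d:ℝ) * Qcnt U j s) * (d:ℝ)^j :=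
        mul_le_mul_of_nonneg_right h (by positivity)
    _ = (Qcnt U j s : ℝ) * (d:ℝ)^(j+1) := by ring

lemma betaQ_anti {j₁ j₂ : ℕ} (h : j₁ ≤ j₂) (s : ℕ) : betaQ U j₂ s ≤ betaQ U j₁ s := by
  induction j₂ with
  | zero => simp_all
  | succ j ih =>
    rcases Nat.lt_or_ge j₁ (j+1) with hlt | hge
    · exact le_trans (betaQ_mono hd j s) (ih (by omega))
    · have : j₁ = j + 1 := by omega
      subst this
      exact le_refl _

include hr hU hcoh

lemma qq_nonneg {s : ℕ} (hs : s < r) : 0 ≤ qq r μ₀ s := by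
  have hr' : (0:ℝ) < r := by exact_mod_cast hr
  have hμ1 : (1:ℝ) ≤ μ₀ := one_le_mu0 hd hr hU hcoh
  unfold qq
  apply div_nonneg
  · have : (s:ℝ) ≤ (r:ℝ) := by exact_mod_cast le_of_lt hs
    linarith
  · nlinarith

lemma qq_le_one {s : ℕ} (hs : s < r) : qq r μ₀ s ≤ 1 := by
  have hr' : (0:ℝ) < r := by exact_mod_cast hr
  have hμ1 : (1:ℝ) ≤ μ₀ := one_le_mu0 hd hr hU hcoh
  unfold qq
  rw [div_le_one (by nlinarith)]
  have hs' : (0:ℝ) ≤ (s:ℝ) := by positivity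
  nlinarith

lemma betaQ_step (j s : ℕ) (hs : s < r) :
    betaQ U (j+1) (s+1) ≤ (1 - qq r μ₀ s) * betaQ U j (s+1) + qq r μ₀ s * betaQ U j s := by
  have hd' : (0:ℝ) < d := by exact_mod_cast hd
  have h := Qcnt_step hd hr hU hcoh (U := U) j s hs
  have hpj : (0:ℝ) < (d:ℝ)^(j+1) := by positivity
  have key : (Qcnt U (j+1) (s+1) : ℝ)
      ≤ ((1 - qq r μ₀ s) * Qcnt U j (s+1) + qq r μ₀ s * Qcnt U j s) * d :=
    le_of_le_of_eq h (by ring)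
  have hrw : (1 - qq r μ₀ s) * betaQ U j (s+1) + qq r μ₀ s * betaQ U j s
      = ((1 - qq r μ₀ s) * Qcnt U j (s+1) + qq r μ₀ s * Qcnt U j s) * d / (d:ℝ)^(j+1) := by
    unfold betaQ
    field_simp
    ring
  rw [hrw]
  unfold betaQ
  exact div_le_div_of_nonneg_right key hpj.le

lemma betaQ_unroll (s : ℕ) (hs : s < r) :
    ∀ L j : ℕ, L ≤ j → betaQ U j (s+1) ≤ (1 - qq r μ₀ s)^L + betaQ U (j - L) s := by
  intro L
  induction L with
  | zero =>
    intro j _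
    have h1 := betaQ_le_one (U := U) hd j (s+1)
    have h0 := betaQ_nonneg (U := U) hd j s
    simpa using by linarith
  | succ L ih =>
    intro j hLj
    obtain ⟨j', rfl⟩ : ∃ j', j = j' + 1 := ⟨j - 1, by omega⟩
    have hq0 := qq_nonneg hd hr hU hcoh hs
    have hq1 := qq_le_one hd hr hU hcoh hs
    have h1 := betaQ_step hd hr hU hcoh j' s hs
    have h2 := ih j' (by omega)
    have h3 : betaQ U j' s ≤ betaQ U (j' - L) s := betaQ_anti hd (by omega) s
    have hstep : betaQ U (j'+1) (s+1)
        ≤ (1 - qq r μ₀ s) * ((1 - qq r μ₀ s)^L + betaQ U (j' - L) s)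
          + qq r μ₀ s * betaQ U (j' - L) s := by
      calc betaQ U (j'+1) (s+1)
          ≤ (1 - qq r μ₀ s) * betaQ U j' (s+1) + qq r μ₀ s * betaQ U j' s := h1
        _ ≤ (1 - qq r μ₀ s) * ((1 - qq r μ₀ s)^L + betaQ U (j' - L) s)
              + qq r μ₀ s * betaQ U (j' - L) s := by
            apply add_le_add
            · exact mul_le_mul_of_nonneg_left h2 (by linarith)
            · exact mul_le_mul_of_nonneg_left h3 hq0
    have hidx : j' + 1 - (L + 1) = j' - L := by omega
    rw [hidx]
    calc betaQ U (j'+1) (s+1)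
        ≤ (1 - qq r μ₀ s) * ((1 - qq r μ₀ s)^L + betaQ U (j' - L) s)
          + qq r μ₀ s * betaQ U (j' - L) s := hstep
      _ = (1 - qq r μ₀ s)^(L+1) + (1 - qq r μ₀ s) * betaQ U (j' - L) s
          + qq r μ₀ s * betaQ U (j' - L) s := by ring
      _ = (1 - qq r μ₀ s)^(L+1) + betaQ U (j' - L) s := by ring

lemma betaQ_main :
    ∀ (s : ℕ), s ≤ r → ∀ (L : ℕ → ℕ) (j : ℕ), (∑ t ∈ Finset.range s, L t) ≤ j →
      betaQ U j s ≤ ∑ t ∈ Finset.range s, (1 - qq r μ₀ t)^(L t) := by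
  intro s
  induction s with
  | zero =>
    intro _ L j _
    simp [betaQ_zero hd]
  | succ s ih =>
    intro hsr L j hsum
    have hs : s < r := by omega
    rw [Finset.sum_range_succ] at hsum ⊢
    have h1 : betaQ U j (s+1) ≤ (1 - qq r μ₀ s)^(L s) + betaQ U (j - L s) s :=
      betaQ_unroll hd hr hU hcoh s hs (L s) j (by omega)
    have h2 : betaQ U (j - L s) s ≤ ∑ t ∈ Finset.range s, (1 - qq r μ₀ t)^(L t) :=
      ih (by omega) L (j - L s) (by omega)
    linarith
end DP

lemma log8_gt_two : (2:ℝ) < Real.log 8 := by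
  rw [Real.lt_log_iff_exp_lt (by norm_num)]
  have h := Real.exp_one_lt_d9
  calc Real.exp 2 = (Real.exp 1)^2 := by
        rw [← Real.exp_nat_mul]; norm_num
    _ < 8 := by nlinarith [Real.exp_pos 1]

lemma term_bound {r : ℕ} {μ₀ δ : ℝ} (hr : 0 < r) (hμ : 1 ≤ μ₀) (hδ : 0 < δ) (hδ4 : δ < 1/4)
    {t : ℕ} (ht : t < r) {L : ℕ}
    (hL : ((r:ℝ)*μ₀/((r:ℝ)-(t:ℝ))) * Real.log ((r:ℝ)/(4*δ)) ≤ L) :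
    (1 - qq r μ₀ t)^L ≤ 4*δ/r := by
  have hr' : (0:ℝ) < r := by exact_mod_cast hr
  have ht' : (t:ℝ) < r := by exact_mod_cast ht
  have hrt : (0:ℝ) < (r:ℝ) - t := by linarith
  have hq0 : 0 < qq r μ₀ t := by unfold qq; positivity
  have hq1 : qq r μ₀ t ≤ 1 := by
    unfold qq
    rw [div_le_one (by positivity)]
    have ht0 : (0:ℝ) ≤ (t:ℝ) := by positivity
    nlinarith
  have hT : 0 < Real.log ((r:ℝ)/(4*δ)) := by
    apply Real.log_pos
    rw [lt_div_iff₀ (by linarith)]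
    have : (1:ℝ) ≤ (r:ℝ) := by exact_mod_cast hr
    nlinarith
  -- (1-q)^L ≤ exp(-q)^L = exp(-(q*L)) ≤ exp(-T) = 4δ/r
  have h1 : (1 - qq r μ₀ t)^L ≤ Real.exp (-(qq r μ₀ t * L)) := by
    have hbase : 1 - qq r μ₀ t ≤ Real.exp (-(qq r μ₀ t)) := by
      have := Real.add_one_le_exp (-(qq r μ₀ t))
      linarith
    calc (1 - qq r μ₀ t)^L ≤ (Real.exp (-(qq r μ₀ t)))^L :=
          pow_le_pow_left₀ (by linarith) hbase L
      _ = Real.exp (-(qq r μ₀ t) * L) := by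
          rw [← Real.exp_nat_mul]; ring_nf
      _ = Real.exp (-(qq r μ₀ t * L)) := by ring_nf
  have h2 : Real.log ((r:ℝ)/(4*δ)) ≤ qq r μ₀ t * L := by
    have hmul := mul_le_mul_of_nonneg_left hL (le_of_lt hq0)
    have hcancel : qq r μ₀ t * (((r:ℝ)*μ₀/((r:ℝ)-(t:ℝ))) * Real.log ((r:ℝ)/(4*δ)))
        = Real.log ((r:ℝ)/(4*δ)) := by
      unfold qq
      field_simp
    rw [hcancel] at hmul
    exact hmul
  have h3 : Real.exp (-(qq r μ₀ t * L)) ≤ Real.exp (-(Real.log ((r:ℝ)/(4*δ)))) :=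
    Real.exp_le_exp.mpr (by linarith)
  have h4 : Real.exp (-(Real.log ((r:ℝ)/(4*δ)))) = 4*δ/r := by
    rw [Real.exp_neg, Real.exp_log (by positivity)]
    rw [inv_div]
  calc (1 - qq r μ₀ t)^L ≤ Real.exp (-(qq r μ₀ t * L)) := h1
    _ ≤ Real.exp (-(Real.log ((r:ℝ)/(4*δ)))) := h3
    _ = 4*δ/r := h4

lemma harmonic_sum_bound (r : ℕ) (hr : 0 < r) :
    ∑ t ∈ Finset.range r, 1/((r:ℝ) - t) ≤ 1 + Real.log r := by
  have h1 : ∑ t ∈ Finset.range r, 1/((r:ℝ) - t) = ∑ t ∈ Finset.range r, 1/((t:ℝ) + 1) := by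
    rw [← Finset.sum_range_reflect]
    apply Finset.sum_congr rfl
    intro t ht
    rw [Finset.mem_range] at ht
    congr 1
    have : ((r - 1 - t : ℕ) : ℝ) = (r:ℝ) - 1 - t := by
      rw [Nat.sub_sub]
      rw [Nat.cast_sub (by omega : 1 + t ≤ r)]
      push_cast
      ring
    rw [this]
    ring
  rw [h1]
  have h2 : ∑ t ∈ Finset.range r, 1/((t:ℝ) + 1) = ((harmonic r : ℚ) : ℝ) := by
    rw [harmonic]
    push_cast
    apply Finset.sum_congr rfl
    intro t _
    rw [one_div]
  rw [h2]
  exact harmonic_le_one_add_log r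

lemma numeric_choice {r m : ℕ} {μ₀ δ : ℝ} (hr : 0 < r) (hμ : 1 ≤ μ₀) (hδ : 0 < δ)
    (hδ4 : δ < 1/4)
    (hm : (m:ℝ) ≥ 32 * r * μ₀ * (Real.log (2 * r / δ))^2) :
    ∃ L : ℕ → ℕ, (∑ t ∈ Finset.range r, L t) ≤ m ∧
      ∀ t, t < r → ((r:ℝ)*μ₀/((r:ℝ)-(t:ℝ))) * Real.log ((r:ℝ)/(4*δ)) ≤ L t := by
  set T := Real.log ((r:ℝ)/(4*δ)) with hTdef
  set Lg := Real.log (2 * r / δ) with hLgdef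
  have hr' : (0:ℝ) < r := by exact_mod_cast hr
  have hr1 : (1:ℝ) ≤ r := by exact_mod_cast hr
  have hT : 0 < T := by
    apply Real.log_pos
    rw [lt_div_iff₀ (by linarith)]
    nlinarith
  have hLg2 : 2 < Lg := by
    calc (2:ℝ) < Real.log 8 := log8_gt_two
      _ ≤ Lg := by
        apply Real.log_le_log (by norm_num)
        rw [le_div_iff₀ hδ]
        nlinarith
  have hTLg : T ≤ Lg := by
    apply Real.log_le_log (by positivity)
    rw [div_le_div_iff₀ (by linarith) hδ]
    nlinarith
  have hlogr : Real.log r ≤ Lg := by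
    apply Real.log_le_log hr'
    rw [le_div_iff₀ hδ]
    nlinarith
  have hlogr0 : 0 ≤ Real.log r := Real.log_nonneg hr1
  refine ⟨fun t => ⌈((r:ℝ)*μ₀/((r:ℝ)-(t:ℝ))) * T⌉₊, ?_, ?_⟩
  · -- sum bound
    have hsum : (∑ t ∈ Finset.range r, (⌈((r:ℝ)*μ₀/((r:ℝ)-(t:ℝ))) * T⌉₊ : ℝ)) ≤ (m:ℝ) := by
      have hle : ∀ t ∈ Finset.range r, (⌈((r:ℝ)*μ₀/((r:ℝ)-(t:ℝ))) * T⌉₊ : ℝ)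
          ≤ ((r:ℝ)*μ₀/((r:ℝ)-(t:ℝ))) * T + 1 := by
        intro t ht
        rw [Finset.mem_range] at ht
        have ht' : (t:ℝ) < r := by exact_mod_cast ht
        have hpos : (0:ℝ) ≤ ((r:ℝ)*μ₀/((r:ℝ)-(t:ℝ))) * T := by
          apply mul_nonneg _ hT.le
          apply div_nonneg (by positivity) (by linarith)
        exact (Nat.ceil_lt_add_one hpos).le
      calc (∑ t ∈ Finset.range r, (⌈((r:ℝ)*μ₀/((r:ℝ)-(t:ℝ))) * T⌉₊ : ℝ))
          ≤ ∑ t ∈ Finset.range r, (((r:ℝ)*μ₀/((r:ℝ)-(t:ℝ))) * T + 1) :=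
            Finset.sum_le_sum hle
        _ = (r:ℝ)*μ₀*T * (∑ t ∈ Finset.range r, 1/((r:ℝ)-(t:ℝ))) + r := by
            rw [Finset.sum_add_distrib, Finset.mul_sum]
            simp only [Finset.sum_const, Finset.card_range, nsmul_eq_mul, mul_one]
            congr 1
            apply Finset.sum_congr rfl
            intro t _
            ring
        _ ≤ (r:ℝ)*μ₀*T * (1 + Real.log r) + r := by
            have hpos : (0:ℝ) ≤ (r:ℝ)*μ₀*T := by positivity
            have := harmonic_sum_bound r hr
            nlinarith [this]
        _ ≤ 32 * r * μ₀ * Lg^2 := by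
            have hA : (0:ℝ) < r * μ₀ := by nlinarith
            have h1 : T * (1 + Real.log r) ≤ Lg * (1 + Lg) := by nlinarith
            have h2 : Lg * (1 + Lg) ≤ (3/2) * Lg^2 := by nlinarith
            have h3 : (r:ℝ) ≤ (1/4) * (r * μ₀ * Lg^2) := by nlinarith
            have h4 : r * μ₀ * (T * (1 + Real.log r)) ≤ r * μ₀ * ((3/2) * Lg^2) :=
              mul_le_mul_of_nonneg_left (h1.trans h2) (by positivity)
            nlinarith [h3, h4]
        _ ≤ m := hm
    have : ((∑ t ∈ Finset.range r, ⌈((r:ℝ)*μ₀/((r:ℝ)-(t:ℝ))) * T⌉₊ : ℕ) : ℝ) ≤ (m:ℝ) := by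
      push_cast
      exact hsum
    exact_mod_cast this
  · intro t ht
    exact Nat.le_ceil _

lemma card_filter_eq_of_iff {α : Type*} [Fintype α] {p q : α → Prop}
    [DecidablePred p] [DecidablePred q] (h : ∀ a, p a ↔ q a) :
    (Finset.univ.filter p).card = (Finset.univ.filter q).card := by
  apply le_antisymm
  · apply Finset.card_le_card
    intro a ha
    rw [Finset.mem_filter] at *
    exact ⟨ha.1, (h a).mp ha.2⟩
  · apply Finset.card_le_card
    intro a ha
    rw [Finset.mem_filter] at *
    exact ⟨ha.1, (h a).mpr ha.2⟩

lemma unifProb_nonneg {α : Type*} [Fintype α] (P : α → Prop) : 0 ≤ unifProb P := by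
  unfold unifProb; positivity

lemma unifProb_mono {α : Type*} [Fintype α] {P Q : α → Prop} (h : ∀ a, P a → Q a) :
    unifProb P ≤ unifProb Q := by
  unfold unifProb
  have hsub : (Finset.univ.filter fun a => P a) ⊆ Finset.univ.filter fun a => Q a := by
    intro a ha
    rw [Finset.mem_filter] at *
    exact ⟨ha.1, h a ha.2⟩
  apply div_le_div_of_nonneg_right ?_ ?_
  · exact_mod_cast Finset.card_le_card hsub
  · positivity

lemma unifProb_compl {α : Type*} [Fintype α] (hcard : 0 < Fintype.card α) (P : α → Prop) :
    unifProb P = 1 - unifProb (fun a => ¬ P a) := by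
  unfold unifProb
  have h := Finset.card_filter_add_card_filter_not (s := (Finset.univ : Finset α))
    (fun a => P a)
  rw [Finset.card_univ] at h
  have hc : (0:ℝ) < (Fintype.card α : ℝ) := by exact_mod_cast hcard
  field_simp
  have h2 : ((Finset.univ.filter fun a => P a).card : ℝ)
      + (((@Finset.filter α (fun a => ¬ P a) (fun a => Classical.propDecidable _)
          Finset.univ)).card : ℝ) = (Fintype.card α : ℝ) := by
    have h' : (Finset.univ.filter fun a => P a).card
        + (@Finset.filter α (fun a => ¬ P a) (fun a => Classical.propDecidable _)
          Finset.univ).card = Fintype.card α := by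
      convert h
    exact_mod_cast h'
  have h4 := congrArg (Nat.cast (R := ℝ)) h
  push_cast at h4
  linarith

lemma bad_rank {d r r' m : ℕ} (U : Matrix (Fin d) (Fin r) ℝ)
    (Ut : Matrix (Fin d) (Fin r') ℝ) (C : Matrix (Fin r) (Fin r') ℝ) (hsub : Ut = U * C)
    (x : Fin d → ℝ) (c : Fin r → ℝ) (hx : x = U.mulVec c)
    (hnot : ¬ ∃ c' : Fin r' → ℝ, x = Ut.mulVec c')
    (Ω : Fin m → Fin d) (hbad : ¬ 0 < projResidSq Ut x Ω) :
    Module.finrank ℝ (Wspan U Ω) < r := by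
  have h0 : 0 ≤ projResidSq Ut x Ω := by unfold projResidSq; positivity
  have heq : projResidSq Ut x Ω = 0 := le_antisymm (not_lt.mp hbad) h0
  unfold projResidSq at heq
  set yΩ : EuclideanSpace ℝ (Fin m) := WithLp.toLp 2 (fun j => x (Ω j)) with hyΩ
  set S : Submodule ℝ (EuclideanSpace ℝ (Fin m)) :=
    Submodule.span ℝ (Set.range fun k : Fin r' =>
      (WithLp.toLp 2 (fun j => Ut (Ω j) k) : EuclideanSpace ℝ (Fin m))) with hS
  have hmem : yΩ ∈ S := by
    have h1 : ‖yΩ - (S.orthogonalProjection yΩ : EuclideanSpace ℝ (Fin m))‖ = 0 := by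
      have := heq
      rwa [pow_eq_zero_iff (by norm_num : 2 ≠ 0)] at this
    rw [norm_eq_zero, sub_eq_zero] at h1
    exact Submodule.starProjection_eq_self_iff.mp h1.symm
  rw [hS, Submodule.mem_span_range_iff_exists_fun] at hmem
  obtain ⟨b, hb⟩ := hmem
  have hbj : ∀ j : Fin m, ∑ k, b k * Ut (Ω j) k = x (Ω j) := by
    intro j
    have h1 := congrArg (EuclideanSpace.proj (𝕜 := ℝ) j) hb
    simp only [map_sum, _root_.map_smul, smul_eq_mul] at h1
    convert h1 using 2 <;> rfl
  set a : EuclideanSpace ℝ (Fin r) := WithLp.toLp 2 (C.mulVec b - c : Fin r → ℝ) with ha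
  have hane : a ≠ 0 := by
    intro h
    apply hnot
    refine ⟨b, ?_⟩
    have hcb : C.mulVec b = c := by
      rw [ha] at h
      have h' := congrArg WithLp.ofLp h
      rwa [WithLp.ofLp_toLp, WithLp.ofLp_zero, sub_eq_zero] at h'
    rw [hx, ← hcb, hsub, ← Matrix.mulVec_mulVec]
  have hperp : ∀ j : Fin m, (inner ℝ (rowU U (Ω j)) a : ℝ) = 0 := by
    intro j
    have hinner : (inner ℝ (rowU U (Ω j)) a : ℝ) = ∑ k, U (Ω j) k * a k := by
      simp [PiLp.inner_apply, rowU, RCLike.inner_apply, conj_trivial]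
      exact Finset.sum_congr rfl fun _ _ => mul_comm _ _
    rw [hinner]
    have hsplit : ∑ k, U (Ω j) k * a k
        = (∑ k, U (Ω j) k * (C.mulVec b) k) - ∑ k, U (Ω j) k * c k := by
      rw [← Finset.sum_sub_distrib]
      apply Finset.sum_congr rfl
      intro k _
      rw [ha]
      simp [Pi.sub_apply]
      ring
    have hxOj : ∑ k, U (Ω j) k * c k = x (Ω j) := by
      rw [hx]
      simp [Matrix.mulVec, dotProduct]
    have hfirst : ∑ k, U (Ω j) k * (C.mulVec b) k = ∑ l, b l * Ut (Ω j) l := by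
      rw [hsub]
      calc ∑ k, U (Ω j) k * (C.mulVec b) k
          = ∑ k, ∑ l, U (Ω j) k * (C k l * b l) := by
            apply Finset.sum_congr rfl
            intro k _
            rw [Matrix.mulVec, dotProduct, Finset.mul_sum]
        _ = ∑ l, ∑ k, U (Ω j) k * (C k l * b l) := Finset.sum_comm
        _ = ∑ l, b l * ((U * C) (Ω j) l) := by
            apply Finset.sum_congr rfl
            intro l _
            rw [Matrix.mul_apply, Finset.mul_sum]
            apply Finset.sum_congr rfl
            intro k _
            ring
    rw [hsplit, hxOj, hfirst, hbj j]
    ring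
  -- conclude rank < r
  have hle : Module.finrank ℝ (Wspan U Ω) ≤ r := by
    have h := Submodule.finrank_le (Wspan U Ω)
    rwa [finrank_euclideanSpace_fin] at h
  rcases lt_or_eq_of_le hle with h | h
  · exact h
  · exfalso
    have htop : Wspan U Ω = ⊤ := by
      apply Submodule.eq_top_of_finrank_eq
      rw [h, finrank_euclideanSpace_fin]
    have hWle : Wspan U Ω ≤ (Submodule.span ℝ {a})ᗮ := by
      rw [Wspan, Submodule.span_le]
      rintro _ ⟨t, rfl⟩
      rw [SetLike.mem_coe, Submodule.mem_orthogonal]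
      intro u hu
      obtain ⟨s, rfl⟩ := Submodule.mem_span_singleton.mp hu
      rw [real_inner_smul_left]
      rw [real_inner_comm]
      rw [hperp t]
      ring
    have haz : a ∈ (Submodule.span ℝ {a})ᗮ := hWle (htop ▸ Submodule.mem_top)
    have : (inner ℝ a a : ℝ) = 0 := by
      rw [Submodule.mem_orthogonal] at haz
      have := haz a (Submodule.mem_span_singleton_self a)
      rwa [real_inner_comm] at this
    rw [inner_self_eq_zero] at this
    exact hane this

/-- Corollary 1 (detection of a new direction): let U be an r-dimensional subspace of ℝ^d with
coherence at most μ₀ (U given by a matrix with orthonormal columns), Ũ a subspace of U (given by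
an orthonormal matrix Ut = U·C), and x ∈ U with x ∉ Ũ.  If Ω is a list of
m ≥ 32·r·μ₀·log²(2r/δ) indices drawn i.i.d. uniformly from [d], then with probability at least
1 − 4δ we have ‖x_Ω − P_{Ũ_Ω} x_Ω‖₂ > 0. -/
theorem new_direction_detected
    {d r r' m : ℕ} (μ₀ δ : ℝ) (hδ : 0 < δ)
    (U : Matrix (Fin d) (Fin r) ℝ) (hU : Uᵀ * U = 1) (hcoh : matCoh U ≤ μ₀)
    (Ut : Matrix (Fin d) (Fin r') ℝ) (hUt : Utᵀ * Ut = 1)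
    (C : Matrix (Fin r) (Fin r') ℝ) (hsub : Ut = U * C)
    (x : Fin d → ℝ) (c : Fin r → ℝ) (hx : x = U.mulVec c)
    (hnot : ¬ ∃ c' : Fin r' → ℝ, x = Ut.mulVec c')
    (hm : (m : ℝ) ≥ 32 * r * μ₀ * (Real.log (2 * r / δ)) ^ 2) :
    unifProb (fun Ω : Fin m → Fin d => 0 < projResidSq Ut x Ω) ≥ 1 - 4 * δ := by
  by_cases hδ4 : (1/4:ℝ) ≤ δ
  · have h0 := unifProb_nonneg (fun Ω : Fin m → Fin d => 0 < projResidSq Ut x Ω)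
    linarith
  push_neg at hδ4
  rcases Nat.eq_zero_or_pos d with hd0 | hd
  · exfalso
    subst hd0
    exact hnot ⟨0, funext fun i => i.elim0⟩
  rcases Nat.eq_zero_or_pos r with hr0 | hr
  · exfalso
    subst hr0
    apply hnot
    refine ⟨0, ?_⟩
    rw [Matrix.mulVec_zero, hx]
    funext i
    simp [Matrix.mulVec, dotProduct]
  have hμ1 : 1 ≤ μ₀ := one_le_mu0 hd hr hU hcoh
  obtain ⟨L, hLsum, hLle⟩ := numeric_choice hr hμ1 hδ hδ4 hm
  have hmain := betaQ_main hd hr hU hcoh r le_rfl L m hLsum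
  have hterm : ∀ t ∈ Finset.range r, (1 - qq r μ₀ t)^(L t) ≤ 4*δ/r := by
    intro t ht
    rw [Finset.mem_range] at ht
    exact term_bound hr hμ1 hδ hδ4 ht (hLle t ht)
  have hr' : (0:ℝ) < r := by exact_mod_cast hr
  have hsum4 : ∑ t ∈ Finset.range r, (1 - qq r μ₀ t)^(L t) ≤ 4*δ := by
    calc ∑ t ∈ Finset.range r, (1 - qq r μ₀ t)^(L t)
        ≤ ∑ _t ∈ Finset.range r, 4*δ/r := Finset.sum_le_sum hterm
      _ = r * (4*δ/r) := by rw [Finset.sum_const, Finset.card_range, nsmul_eq_mul]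
      _ = 4*δ := by field_simp
  have hrankeq : unifProb (fun Ω : Fin m → Fin d => Module.finrank ℝ (Wspan U Ω) < r)
      = betaQ U m r := by
    unfold unifProb betaQ
    congr 1
    · unfold Qcnt
      norm_cast
      exact @card_filter_eq_of_iff (Fin m → Fin d) _
        (fun a => (fun Ω : Fin m → Fin d => Module.finrank ℝ (Wspan U Ω) < r) a)
        (fun g : Fin m → Fin d => Module.finrank ℝ (Wspan U g) < r)
        (fun a => Classical.propDecidable _)
        (fun a => (Module.finrank ℝ (Wspan U a)).decLt r)
        (fun a => Iff.rfl)
    · rw [Fintype.card_fun]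
      simp
  have hbadrank : unifProb (fun Ω : Fin m → Fin d => ¬ 0 < projResidSq Ut x Ω) ≤ 4*δ := by
    calc unifProb (fun Ω : Fin m → Fin d => ¬ 0 < projResidSq Ut x Ω)
        ≤ unifProb (fun Ω : Fin m → Fin d => Module.finrank ℝ (Wspan U Ω) < r) :=
          unifProb_mono (fun Ω hΩ => bad_rank U Ut C hsub x c hx hnot Ω hΩ)
      _ = betaQ U m r := hrankeq
      _ ≤ ∑ t ∈ Finset.range r, (1 - qq r μ₀ t)^(L t) := hmain
      _ ≤ 4*δ := hsum4
  have hcard : 0 < Fintype.card (Fin m → Fin d) := by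
    have : Nonempty (Fin m → Fin d) := ⟨fun _ => ⟨0, hd⟩⟩
    exact Fintype.card_pos
  rw [unifProb_compl hcard]
  linarith

end Aux
end

section
/- Let A and N be real d×n matrices and write Â = A + N. Then for every k ≥ 1: ‖A − Â_k‖₂ ≤ ‖A − A_k‖₂ + 2‖N_k‖₂, where M_k denotes the best rank-k approximation of a matrix M. -/
open Matrix
open scoped Matrix.Norms.L2Operator

set_option maxHeartbeats 1000000

/-- Frobenius norm of a matrix. -/
noncomputable def frobNorm {p q : ℕ} (M : Matrix (Fin p) (Fin q) ℝ) : ℝ :=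
  Real.sqrt (∑ i, ∑ j, M i j ^ 2)

/-- The d×n rectangular "diagonal" matrix with entries s 0 ≥ s 1 ≥ … on the diagonal. -/
def diagDec (d n : ℕ) (s : ℕ → ℝ) : Matrix (Fin d) (Fin n) ℝ :=
  Matrix.of fun i j => if (i : ℕ) = (j : ℕ) then s i else 0

/-- The same diagonal matrix truncated to its first k diagonal entries. -/
def diagTrunc (d n : ℕ) (s : ℕ → ℝ) (k : ℕ) : Matrix (Fin d) (Fin n) ℝ :=
  Matrix.of fun i j => if (i : ℕ) = (j : ℕ) ∧ (i : ℕ) < k then s i else 0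

/-- A singular value decomposition M = U·Σ·Vᵀ of a d×n real matrix M: U and V are orthogonal
and the diagonal entries of Σ are the singular values σ₁ ≥ σ₂ ≥ … ≥ 0.  Every real matrix
admits such a decomposition. -/
structure SVDData (d n : ℕ) (M : Matrix (Fin d) (Fin n) ℝ) where
  U : Matrix (Fin d) (Fin d) ℝ
  V : Matrix (Fin n) (Fin n) ℝ
  s : ℕ → ℝ
  orthU : Uᵀ * U = 1
  orthV : Vᵀ * V = 1
  nonneg : ∀ i, 0 ≤ s i
  anti : ∀ i j, i ≤ j → s j ≤ s i
  eq : M = U * diagDec d n s * Vᵀ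

/-- The best rank-k approximation M_k of M: the truncated SVD keeping the top k singular
values. -/
def SVDData.trunc {d n : ℕ} {M : Matrix (Fin d) (Fin n) ℝ} (sd : SVDData d n M) (k : ℕ) :
    Matrix (Fin d) (Fin n) ℝ :=
  sd.U * diagTrunc d n sd.s k * sd.Vᵀ


noncomputable def ev {p : ℕ} (v : Fin p → ℝ) : EuclideanSpace ℝ (Fin p) :=
  (WithLp.equiv 2 (Fin p → ℝ)).symm v

lemma norm_ev_sq {p : ℕ} (v : Fin p → ℝ) : ‖ev v‖ ^ 2 = ∑ i, v i ^ 2 := by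
  rw [EuclideanSpace.norm_eq, Real.sq_sqrt (by positivity)]
  simp [ev, sq_abs]

lemma ev_mulVec_le {p q : ℕ} (M : Matrix (Fin p) (Fin q) ℝ) (v : Fin q → ℝ) :
    ‖ev (M *ᵥ v)‖ ≤ ‖M‖ * ‖ev v‖ := by
  simpa [ev] using Matrix.l2_opNorm_mulVec M ((WithLp.equiv 2 (Fin q → ℝ)).symm v)

lemma norm_le_of_bound {p q : ℕ} (M : Matrix (Fin p) (Fin q) ℝ) {c : ℝ} (hc : 0 ≤ c)
    (h : ∀ v : Fin q → ℝ, ‖ev (M *ᵥ v)‖ ≤ c * ‖ev v‖) : ‖M‖ ≤ c := by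
  rw [Matrix.l2_opNorm_def]
  refine ContinuousLinearMap.opNorm_le_bound _ hc fun x => ?_
  have := h ((WithLp.equiv 2 (Fin q → ℝ)) x)
  simpa [ev, Matrix.toEuclideanLin_apply] using this

lemma norm_eq_of_sq_eq {a b : ℝ} (ha : 0 ≤ a) (hb : 0 ≤ b) (h : a ^ 2 = b ^ 2) : a = b := by
  nlinarith

lemma le_of_sq_le {a b : ℝ} (hb : 0 ≤ b) (h : a ^ 2 ≤ b ^ 2) : a ≤ b := by
  nlinarith [sq_nonneg (a - b), sq_nonneg (a + b)]

lemma mulVec_orth_norm {p : ℕ} (U : Matrix (Fin p) (Fin p) ℝ) (hU : Uᵀ * U = 1)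
    (v : Fin p → ℝ) : ‖ev (U *ᵥ v)‖ = ‖ev v‖ := by
  refine norm_eq_of_sq_eq (norm_nonneg _) (norm_nonneg _) ?_
  rw [norm_ev_sq, norm_ev_sq]
  have key : (U *ᵥ v) ⬝ᵥ (U *ᵥ v) = v ⬝ᵥ v := by
    calc (U *ᵥ v) ⬝ᵥ (U *ᵥ v) = (v ᵥ* Uᵀ) ⬝ᵥ (U *ᵥ v) := by rw [Matrix.vecMul_transpose]
    _ = v ⬝ᵥ (Uᵀ *ᵥ (U *ᵥ v)) := (dotProduct_mulVec v Uᵀ _).symm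
    _ = v ⬝ᵥ ((Uᵀ * U) *ᵥ v) := by rw [Matrix.mulVec_mulVec]
    _ = v ⬝ᵥ v := by rw [hU, Matrix.one_mulVec]
  calc ∑ i, (U *ᵥ v) i ^ 2 = (U *ᵥ v) ⬝ᵥ (U *ᵥ v) := by simp [dotProduct, sq]
  _ = v ⬝ᵥ v := key
  _ = ∑ i, v i ^ 2 := by simp [dotProduct, sq]

lemma norm_conj_le {d n : ℕ} (U : Matrix (Fin d) (Fin d) ℝ) (M : Matrix (Fin d) (Fin n) ℝ)
    (V : Matrix (Fin n) (Fin n) ℝ) (hU : Uᵀ * U = 1) (hV : Vᵀ * V = 1) :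
    ‖U * M * Vᵀ‖ ≤ ‖M‖ := by
  refine norm_le_of_bound _ (norm_nonneg M) fun v => ?_
  have hVt : (Vᵀ)ᵀ * Vᵀ = 1 := by
    rw [Matrix.transpose_transpose]
    exact mul_eq_one_comm.mp hV
  have h1 : (U * M * Vᵀ) *ᵥ v = U *ᵥ (M *ᵥ (Vᵀ *ᵥ v)) := by
    rw [← Matrix.mulVec_mulVec, ← Matrix.mulVec_mulVec]
  rw [h1, mulVec_orth_norm U hU, ← mulVec_orth_norm Vᵀ hVt v]
  exact ev_mulVec_le M _

lemma norm_conj {d n : ℕ} (U : Matrix (Fin d) (Fin d) ℝ) (M : Matrix (Fin d) (Fin n) ℝ)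
    (V : Matrix (Fin n) (Fin n) ℝ) (hU : Uᵀ * U = 1) (hV : Vᵀ * V = 1) :
    ‖U * M * Vᵀ‖ = ‖M‖ := by
  refine le_antisymm (norm_conj_le U M V hU hV) ?_
  have hUt : (Uᵀ)ᵀ * Uᵀ = 1 := by
    rw [Matrix.transpose_transpose]; exact mul_eq_one_comm.mp hU
  have := norm_conj_le Uᵀ (U * M * Vᵀ) Vᵀ hUt (by rw [Matrix.transpose_transpose]; exact mul_eq_one_comm.mp hV)
  have heq : Uᵀ * (U * M * Vᵀ) * Vᵀᵀ = M := by
    rw [Matrix.transpose_transpose,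
      show Uᵀ * (U * M * Vᵀ) * V = (Uᵀ * U) * M * (Vᵀ * V) by simp only [Matrix.mul_assoc],
      hU, hV, Matrix.one_mul, Matrix.mul_one]
  rwa [heq] at this

-- sum over Fin p of a "partial" function vs sum over Fin q
lemma sum_dite_le {p q : ℕ} (f : Fin q → ℝ) (hf : ∀ j, 0 ≤ f j) :
    ∑ i : Fin p, (if h : (i : ℕ) < q then f ⟨i, h⟩ else 0) ≤ ∑ j, f j := by
  set F : ℕ → ℝ := fun m => if h : m < q then f ⟨m, h⟩ else 0 with hF
  have hFnn : ∀ m, 0 ≤ F m := by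
    intro m; rw [hF]; dsimp only; split
    · apply hf
    · exact le_rfl
  have h1 : ∑ i : Fin p, (if h : (i : ℕ) < q then f ⟨i, h⟩ else 0) = ∑ m ∈ Finset.range p, F m := by
    rw [Fin.sum_univ_eq_sum_range (fun m => F m) p]
  have h2 : ∑ j, f j = ∑ m ∈ Finset.range q, F m := by
    rw [← Fin.sum_univ_eq_sum_range (fun m => F m) q]
    apply Finset.sum_congr rfl
    intro j hj
    rw [hF]; simp
  rw [h1, h2]
  have hsub : ∑ m ∈ Finset.range q, F m = ∑ m ∈ Finset.range (p + q), F m := by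
    apply Finset.sum_subset
    · exact Finset.range_subset_range.2 (by omega)
    · intro m _ hm
      rw [Finset.mem_range, not_lt] at hm
      rw [hF]; exact dif_neg (by omega)
  rw [hsub]
  exact Finset.sum_le_sum_of_subset_of_nonneg (Finset.range_subset_range.2 (by omega))
    (fun m _ _ => hFnn m)


lemma diag_mulVec {p q : ℕ} (t : ℕ → ℝ) (v : Fin q → ℝ) (i : Fin p) :
    ((Matrix.of fun (i : Fin p) (j : Fin q) => if (i : ℕ) = (j : ℕ) then t i else 0) *ᵥ v) i
      = if h : (i : ℕ) < q then t i * v ⟨i, h⟩ else 0 := by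
  unfold Matrix.mulVec dotProduct
  by_cases h : (i : ℕ) < q
  · rw [dif_pos h]
    rw [Finset.sum_eq_single ⟨(i : ℕ), h⟩]
    · simp
    · intro j _ hj
      have : (i : ℕ) ≠ (j : ℕ) := fun hc => hj (by ext; exact hc.symm)
      simp [this]
    · simp
  · rw [dif_neg h]
    apply Finset.sum_eq_zero
    intro j _
    have : (i : ℕ) ≠ (j : ℕ) := by omega
    simp [this]

/-- norm of a diagonal-type matrix is at most a bound on the |entries|. -/
lemma norm_diag_le {p q : ℕ} (t : ℕ → ℝ) {c : ℝ} (hc : 0 ≤ c) (h : ∀ i, |t i| ≤ c) :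
    ‖(Matrix.of fun (i : Fin p) (j : Fin q) => if (i : ℕ) = (j : ℕ) then t i else 0)‖ ≤ c := by
  refine norm_le_of_bound _ hc fun v => ?_
  refine le_of_sq_le (by positivity) ?_
  rw [mul_pow, norm_ev_sq, norm_ev_sq]
  calc ∑ i, ((Matrix.of fun (i : Fin p) (j : Fin q) =>
        if (i : ℕ) = (j : ℕ) then t i else 0) *ᵥ v) i ^ 2
      ≤ ∑ i : Fin p, c ^ 2 * (if h : (i : ℕ) < q then v ⟨i, h⟩ ^ 2 else 0) := by
        refine Finset.sum_le_sum fun i _ => ?_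
        rw [diag_mulVec]
        by_cases hiq : (i : ℕ) < q
        · rw [dif_pos hiq, dif_pos hiq, mul_pow]
          have h1 : t i ^ 2 ≤ c ^ 2 := by
            have := h i; nlinarith [abs_nonneg (t i), sq_abs (t i), abs_le_abs (le_refl c)]
          nlinarith [sq_nonneg (v ⟨(i : ℕ), hiq⟩)]
        · rw [dif_neg hiq, dif_neg hiq]; norm_num
    _ = c ^ 2 * ∑ i : Fin p, (if h : (i : ℕ) < q then v ⟨i, h⟩ ^ 2 else 0) := by
        rw [Finset.mul_sum]
    _ ≤ c ^ 2 * ∑ j, v j ^ 2 := by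
        have := sum_dite_le (p := p) (fun j : Fin q => v j ^ 2) (fun j => sq_nonneg _)
        nlinarith [sq_nonneg c]

lemma diag_sub_trunc (d n : ℕ) (s : ℕ → ℝ) (k : ℕ) :
    diagDec d n s - diagTrunc d n s k =
      Matrix.of fun (i : Fin d) (j : Fin n) =>
        if (i : ℕ) = (j : ℕ) then (if (i : ℕ) < k then 0 else s i) else 0 := by
  ext i j
  simp only [diagDec, diagTrunc, Matrix.sub_apply, Matrix.of_apply]
  by_cases h1 : (i : ℕ) = (j : ℕ)
  · simp only [h1, true_and, if_true]
    by_cases h2 : (j : ℕ) < k <;> simp [h2]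
  · simp [h1]

/-- ‖Σ − Σ_k‖ ≤ s k for nonneg decreasing s. -/
lemma norm_diag_sub_trunc_le (d n : ℕ) (s : ℕ → ℝ) (k : ℕ)
    (hnn : ∀ i, 0 ≤ s i) (hanti : ∀ i j, i ≤ j → s j ≤ s i) :
    ‖diagDec d n s - diagTrunc d n s k‖ ≤ s k := by
  rw [diag_sub_trunc]
  refine norm_diag_le (fun m => if m < k then 0 else s m) (hnn k) fun i => ?_
  by_cases h : i < k
  · simp [h, hnn k]
  · rw [if_neg h, abs_of_nonneg (hnn i)]
    exact hanti k i (by omega)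

/-- ‖Σ‖ ≤ s 0. -/
lemma norm_diag_le_s0 (d n : ℕ) (s : ℕ → ℝ)
    (hnn : ∀ i, 0 ≤ s i) (hanti : ∀ i j, i ≤ j → s j ≤ s i) :
    ‖diagDec d n s‖ ≤ s 0 := by
  have h0 : diagTrunc d n s 0 = 0 := by
    ext i j; simp [diagTrunc]
  have := norm_diag_sub_trunc_le d n s 0 hnn hanti
  rwa [h0, sub_zero] at this


lemma diagTrunc_eq (d n : ℕ) (s : ℕ → ℝ) (k : ℕ) :
    diagTrunc d n s k = Matrix.of fun (i : Fin d) (j : Fin n) =>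
      if (i : ℕ) = (j : ℕ) then (if (i : ℕ) < k then s i else 0) else 0 := by
  ext i j
  simp only [diagTrunc, Matrix.of_apply]
  by_cases h1 : (i : ℕ) = (j : ℕ) <;> by_cases h2 : (i : ℕ) < k <;> simp [h1, h2]

/-- degenerate case: if min d n ≤ k then trunc = M -/
lemma trunc_eq_self {d n : ℕ} {M : Matrix (Fin d) (Fin n) ℝ} (sd : SVDData d n M) (k : ℕ)
    (h : d ≤ k ∨ n ≤ k) : sd.trunc k = M := by
  have : diagTrunc d n sd.s k = diagDec d n sd.s := by
    ext i j
    simp only [diagTrunc, diagDec, Matrix.of_apply]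
    by_cases h1 : (i : ℕ) = (j : ℕ)
    · have : (i : ℕ) < k := by
        rcases h with h | h
        · omega
        · have := j.isLt; omega
      have hj : (j : ℕ) < k := by omega
      simp [h1, hj]
    · simp [h1]
  rw [SVDData.trunc, this, ← sd.eq]

/-- columns of an orthogonal matrix are orthonormal -/
lemma cols_orthonormal {n : ℕ} (V : Matrix (Fin n) (Fin n) ℝ) (hV : Vᵀ * V = 1) :
    Orthonormal ℝ (fun j : Fin n => ev (fun m => V m j)) := by
  rw [orthonormal_iff_ite]
  intro i j
  have : (inner ℝ (ev (fun m => V m i)) (ev (fun m => V m j)) : ℝ) = (Vᵀ * V) i j := by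
    simp only [PiLp.inner_apply, RCLike.inner_apply, conj_trivial, Matrix.mul_apply,
      Matrix.transpose_apply]
    exact Finset.sum_congr rfl fun x _ => mul_comm _ _
  rw [this, hV, Matrix.one_apply]

/-- rank of truncated SVD is at most k -/
lemma rank_trunc_le {d n : ℕ} {M : Matrix (Fin d) (Fin n) ℝ} (sd : SVDData d n M) (k : ℕ) :
    Module.finrank ℝ (LinearMap.range (Matrix.toEuclideanLin (sd.trunc k))) ≤ k := by
  classical
  set G := diagTrunc d n sd.s k with hG
  have hcomp : Matrix.toEuclideanLin (sd.trunc k) =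
      ((Matrix.toEuclideanLin sd.U).comp (Matrix.toEuclideanLin G)).comp
        (Matrix.toEuclideanLin sd.Vᵀ) := by
    rw [SVDData.trunc, Matrix.toEuclideanLin_eq_toLin, ← hG]
    rw [Matrix.toLin_mul (PiLp.basisFun 2 ℝ (Fin n)) (PiLp.basisFun 2 ℝ (Fin n))
      (PiLp.basisFun 2 ℝ (Fin d))]
    rw [Matrix.toLin_mul (PiLp.basisFun 2 ℝ (Fin n)) (PiLp.basisFun 2 ℝ (Fin d))
      (PiLp.basisFun 2 ℝ (Fin d))]
    rfl
  rw [hcomp]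
  refine le_trans (Submodule.finrank_mono (LinearMap.range_comp_le_range _ _)) ?_
  rw [LinearMap.range_comp]
  refine le_trans (Submodule.finrank_map_le _ _) ?_
  set T : Finset (Fin d) := Finset.univ.filter (fun i => (i : ℕ) < k) with hT
  set S : Finset (EuclideanSpace ℝ (Fin d)) :=
    T.image (fun i => EuclideanSpace.single i (1 : ℝ)) with hS
  have hrange : LinearMap.range (Matrix.toEuclideanLin G) ≤ Submodule.span ℝ (S : Set _) := by
    rintro y ⟨x, rfl⟩
    have hx : Matrix.toEuclideanLin G x = ev (G *ᵥ ((WithLp.equiv 2 (Fin n → ℝ)) x)) := by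
      rw [Matrix.toEuclideanLin_apply]; rfl
    rw [hx]
    set v := (WithLp.equiv 2 (Fin n → ℝ)) x with hv
    set w := G *ᵥ v with hwdef
    have hw0 : ∀ j : Fin d, ¬ ((j : ℕ) < k) → w j = 0 := by
      intro j hj
      rw [hwdef, hG, diagTrunc_eq,
        diag_mulVec (fun m => if m < k then sd.s m else 0) v j]
      by_cases h2 : (j : ℕ) < n
      · rw [dif_pos h2, if_neg hj, zero_mul]
      · rw [dif_neg h2]
    have hw : ev w = ∑ i ∈ T, w i • EuclideanSpace.single i (1 : ℝ) := by
      ext j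
      have happ : (∑ i ∈ T, w i • EuclideanSpace.single i (1 : ℝ)) j
          = ∑ i ∈ T, w i * (if j = i then 1 else 0) := by
        rw [WithLp.ofLp_sum, Finset.sum_apply]
        refine Finset.sum_congr rfl fun i _ => ?_
        simp [EuclideanSpace.single_apply]
      rw [happ]
      have : ∑ i ∈ T, w i * (if j = i then 1 else 0)
          = ∑ i ∈ T, (if i = j then w i else 0) := by
        refine Finset.sum_congr rfl fun i _ => ?_
        by_cases hij : i = j
        · simp [hij]
        · simp [hij, Ne.symm hij]
      rw [this, Finset.sum_ite_eq' T j (fun i => w i)]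
      by_cases hjT : j ∈ T
      · rw [if_pos hjT]; rfl
      · rw [if_neg hjT]
        have : ¬ ((j : ℕ) < k) := by
          intro hc; exact hjT (by simp [hT, hc])
        exact hw0 j this
    rw [hw]
    refine Submodule.sum_mem _ fun i hi => ?_
    exact Submodule.smul_mem _ _ (Submodule.subset_span
      (Finset.mem_coe.mpr (Finset.mem_image_of_mem _ hi)))
  refine le_trans (Submodule.finrank_mono hrange) ?_
  refine le_trans (finrank_span_finset_le_card S) ?_
  refine le_trans (Finset.card_image_le) ?_
  calc T.card ≤ (Finset.range k).card := by
        refine Finset.card_le_card_of_injOn (fun i => (i : ℕ)) ?_ ?_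
        · intro i hi
          rw [hT] at hi
          simp only [Finset.coe_filter, Set.mem_setOf_eq] at hi
          simpa using hi
        · intro a _ b _ hab
          exact Fin.ext hab
    _ = k := Finset.card_range k

/-- Eckart–Young lower bound: any matrix B of rank ≤ k is at distance ≥ s k from M. -/
lemma eckart_young_lower {d n k : ℕ} (hkd : k < d) (hkn : k < n)
    {M : Matrix (Fin d) (Fin n) ℝ} (sM : SVDData d n M) (B : Matrix (Fin d) (Fin n) ℝ)
    (hB : Module.finrank ℝ (LinearMap.range (Matrix.toEuclideanLin B)) ≤ k) :
    sM.s k ≤ ‖M - B‖ := by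
  classical
  -- the first k+1 columns of V
  set vv : Fin (k + 1) → EuclideanSpace ℝ (Fin n) :=
    fun i => ev (fun m => sM.V m (Fin.castLE (by omega) i)) with hvv
  have hON : Orthonormal ℝ vv := by
    have := cols_orthonormal sM.V sM.orthV
    exact this.comp _ (Fin.castLE_injective _)
  set W : Submodule ℝ (EuclideanSpace ℝ (Fin n)) := Submodule.span ℝ (Set.range vv) with hW
  have hdimW : Module.finrank ℝ W = k + 1 := by
    rw [hW, finrank_span_eq_card hON.linearIndependent, Fintype.card_fin]
  set f := Matrix.toEuclideanLin B with hf
  set K := LinearMap.ker f with hK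
  have hrn : Module.finrank ℝ (LinearMap.range f) + Module.finrank ℝ K
      = n := by
    have := LinearMap.finrank_range_add_finrank_ker f
    rwa [finrank_euclideanSpace, Fintype.card_fin] at this
  have hsup := Submodule.finrank_sup_add_finrank_inf_eq W K
  have hsuple : Module.finrank ℝ ↥(W ⊔ K) ≤ n := by
    have := Submodule.finrank_le (W ⊔ K)
    rwa [finrank_euclideanSpace, Fintype.card_fin] at this
  have hinf : 0 < Module.finrank ℝ ↥(W ⊓ K) := by omega
  have hbot : W ⊓ K ≠ ⊥ := by
    intro hc
    rw [hc] at hinf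
    simp at hinf
  obtain ⟨x, hx, hx0⟩ := Submodule.exists_mem_ne_zero_of_ne_bot hbot
  obtain ⟨hxW, hxK⟩ := Submodule.mem_inf.mp hx
  set xv := (WithLp.equiv 2 (Fin n → ℝ)) x with hxv
  have hevx : ev xv = x := (WithLp.equiv 2 (Fin n → ℝ)).symm_apply_apply x
  -- B annihilates x
  have hBx : B *ᵥ xv = 0 := by
    have : f x = 0 := hxK
    have h2 : ev (B *ᵥ xv) = 0 := by
      rw [← this, hf, Matrix.toEuclideanLin_apply]; rfl
    exact (WithLp.equiv 2 (Fin d → ℝ)).symm.injective (by simpa [ev] using h2)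
  -- the coordinates of x in the V basis vanish above k
  set y := sM.Vᵀ *ᵥ xv with hy
  have hy0 : ∀ j : Fin n, k < (j : ℕ) → y j = 0 := by
    rw [hy, hxv]
    have : ∀ (z : EuclideanSpace ℝ (Fin n)), z ∈ W →
        ∀ j : Fin n, k < (j : ℕ) → (sM.Vᵀ *ᵥ ((WithLp.equiv 2 (Fin n → ℝ)) z)) j = 0 := by
      intro z hz
      induction hz using Submodule.span_induction with
      | mem z hzm =>
        obtain ⟨i, rfl⟩ := hzm
        intro j hj
        have hcol : (sM.Vᵀ *ᵥ (fun m => sM.V m (Fin.castLE (by omega) i))) j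
            = (sM.Vᵀ * sM.V) j (Fin.castLE (by omega) i) := by
          simp [Matrix.mulVec, Matrix.mul_apply, dotProduct]
        have : (WithLp.equiv 2 (Fin n → ℝ)) (vv i) = fun m => sM.V m (Fin.castLE (by omega) i) := rfl
        rw [this, hcol, sM.orthV, Matrix.one_apply_ne]
        intro hc
        have : (j : ℕ) = (i : ℕ) := by rw [hc]; rfl
        omega
      | zero => intro j hj; simp
      | add a b ha hb iha ihb =>
        intro j hj
        have : (WithLp.equiv 2 (Fin n → ℝ)) (a + b)
            = (WithLp.equiv 2 (Fin n → ℝ)) a + (WithLp.equiv 2 (Fin n → ℝ)) b := rfl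
        rw [this, Matrix.mulVec_add, Pi.add_apply, iha j hj, ihb j hj, add_zero]
      | smul c a ha iha =>
        intro j hj
        have : (WithLp.equiv 2 (Fin n → ℝ)) (c • a) = c • (WithLp.equiv 2 (Fin n → ℝ)) a := rfl
        rw [this, Matrix.mulVec_smul, Pi.smul_apply, iha j hj, smul_zero]
    exact this x hxW
  -- norm of x is preserved
  have hyx : ‖ev y‖ = ‖x‖ := by
    have hVt : (sM.Vᵀ)ᵀ * sM.Vᵀ = 1 := by
      rw [Matrix.transpose_transpose]; exact mul_eq_one_comm.mp sM.orthV
    rw [hy, mulVec_orth_norm sM.Vᵀ hVt xv, hevx]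
  -- main lower bound on ‖M x‖
  have hMx : sM.s k * ‖x‖ ≤ ‖ev (M *ᵥ xv)‖ := by
    have hM : M *ᵥ xv = sM.U *ᵥ (diagDec d n sM.s *ᵥ y) := by
      conv_lhs => rw [sM.eq]
      rw [← Matrix.mulVec_mulVec, ← Matrix.mulVec_mulVec]
    rw [hM, mulVec_orth_norm sM.U sM.orthU, ← hyx]
    refine le_of_sq_le (norm_nonneg _) ?_
    rw [mul_pow, norm_ev_sq, norm_ev_sq]
    -- reduce to sums over ranges
    set F : ℕ → ℝ := fun m => (if h : m < n then sM.s m * y ⟨m, h⟩ else 0) ^ 2 with hF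
    set Gm : ℕ → ℝ := fun m => (if h : m < n then y ⟨m, h⟩ ^ 2 else 0) with hGm
    have hFnn : ∀ m, 0 ≤ F m := fun m => sq_nonneg _
    have hL : ∑ i : Fin d, (diagDec d n sM.s *ᵥ y) i ^ 2 = ∑ m ∈ Finset.range d, F m := by
      rw [← Fin.sum_univ_eq_sum_range (fun m => F m) d]
      refine Finset.sum_congr rfl fun i _ => ?_
      rw [hF]
      dsimp only
      rw [diagDec, diag_mulVec sM.s y i]
    have hR : ∑ j : Fin n, y j ^ 2 = ∑ m ∈ Finset.range n, Gm m := by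
      rw [← Fin.sum_univ_eq_sum_range (fun m => Gm m) n]
      refine Finset.sum_congr rfl fun j _ => ?_
      rw [hGm]
      dsimp only
      rw [dif_pos j.isLt]
    have hGtrunc : ∑ m ∈ Finset.range n, Gm m = ∑ m ∈ Finset.range (k + 1), Gm m := by
      refine (Finset.sum_subset (Finset.range_subset_range.2 (by omega)) ?_).symm
      intro m hm hm2
      rw [Finset.mem_range, not_lt] at hm2
      rw [hGm]
      dsimp only
      by_cases h2 : m < n
      · rw [dif_pos h2, hy0 ⟨m, h2⟩ (show k < m by omega)]; norm_num
      · rw [dif_neg h2]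
    have hFtrunc : ∑ m ∈ Finset.range (k + 1), F m ≤ ∑ m ∈ Finset.range d, F m :=
      Finset.sum_le_sum_of_subset_of_nonneg (Finset.range_subset_range.2 (by omega))
        (fun m _ _ => hFnn m)
    have hcompare : ∀ m ∈ Finset.range (k + 1), sM.s k ^ 2 * Gm m ≤ F m := by
      intro m hm
      rw [Finset.mem_range] at hm
      have hmn : m < n := by omega
      rw [hF, hGm]
      dsimp only
      rw [dif_pos hmn, dif_pos hmn, mul_pow]
      have h1 : sM.s k ≤ sM.s m := sM.anti m k (by omega)
      have h2 : 0 ≤ sM.s k := sM.nonneg k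
      exact mul_le_mul_of_nonneg_right (by nlinarith) (sq_nonneg _)
    calc sM.s k ^ 2 * ∑ j : Fin n, y j ^ 2
        = ∑ m ∈ Finset.range (k + 1), sM.s k ^ 2 * Gm m := by
          rw [hR, hGtrunc, Finset.mul_sum]
      _ ≤ ∑ m ∈ Finset.range (k + 1), F m := Finset.sum_le_sum hcompare
      _ ≤ ∑ m ∈ Finset.range d, F m := hFtrunc
      _ = ∑ i : Fin d, (diagDec d n sM.s *ᵥ y) i ^ 2 := hL.symm
  -- conclude
  have hchain : sM.s k * ‖x‖ ≤ ‖M - B‖ * ‖x‖ := by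
    have h1 : (M - B) *ᵥ xv = M *ᵥ xv := by
      rw [Matrix.sub_mulVec, hBx, sub_zero]
    have h2 := ev_mulVec_le (M - B) xv
    rw [h1, hevx] at h2
    exact le_trans hMx h2
  have hxpos : 0 < ‖x‖ := norm_pos_iff.mpr hx0
  exact le_of_mul_le_mul_right hchain hxpos

lemma norm_trunc_ge_s0 {d n k : ℕ} (hd : 0 < d) (hn : 0 < n) (hk : 0 < k) (s : ℕ → ℝ)
    (hnn : ∀ i, 0 ≤ s i) : s 0 ≤ ‖diagTrunc d n s k‖ := by
  set e0 : Fin n → ℝ := Pi.single ⟨0, hn⟩ 1 with he0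
  have hcol : diagTrunc d n s k *ᵥ e0 = Pi.single (⟨0, hd⟩ : Fin d) (s 0) := by
    funext i
    rw [diagTrunc_eq, diag_mulVec (fun m => if m < k then s m else 0) e0 i]
    by_cases hi : (i : ℕ) = 0
    · have hii : i = ⟨0, hd⟩ := Fin.ext hi
      subst hii
      have h2 : (0 : ℕ) < n := hn
      rw [dif_pos h2]
      simp [he0, hk, Pi.single_apply]
    · have hne : i ≠ ⟨0, hd⟩ := fun hc => hi (by rw [hc])
      rw [Pi.single_apply, if_neg hne]
      by_cases h2 : (i : ℕ) < n
      · rw [dif_pos h2]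
        have : e0 ⟨(i : ℕ), h2⟩ = 0 := by
          rw [he0, Pi.single_apply, if_neg]
          intro hc
          exact hi (by simpa [Fin.ext_iff] using hc)
        rw [this, mul_zero]
      · rw [dif_neg h2]
  have h1 := ev_mulVec_le (diagTrunc d n s k) e0
  rw [hcol] at h1
  have h2 : ev (Pi.single (⟨0, hd⟩ : Fin d) (s 0)) = EuclideanSpace.single (⟨0, hd⟩ : Fin d) (s 0) := rfl
  have h3 : ev e0 = EuclideanSpace.single (⟨0, hn⟩ : Fin n) (1 : ℝ) := rfl
  rw [h2, h3, EuclideanSpace.norm_single, EuclideanSpace.norm_single] at h1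
  simpa [Real.norm_eq_abs, abs_of_nonneg (hnn 0)] using h1

lemma norm_le_norm_trunc {d n k : ℕ} (hk : 1 ≤ k) {M : Matrix (Fin d) (Fin n) ℝ}
    (sd : SVDData d n M) : ‖M‖ ≤ ‖sd.trunc k‖ := by
  rcases Nat.eq_zero_or_pos d with hd | hd
  · subst hd
    have : M = 0 := by ext i j; exact i.elim0
    have h0 : ‖M‖ = 0 := by
      calc ‖M‖ = ‖(0 : Matrix (Fin 0) (Fin n) ℝ)‖ := congrArg _ this
      _ = 0 := norm_zero
    rw [h0]
    exact norm_nonneg _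
  rcases Nat.eq_zero_or_pos n with hn | hn
  · subst hn
    have : M = 0 := by ext i j; exact j.elim0
    have h0 : ‖M‖ = 0 := by
      calc ‖M‖ = ‖(0 : Matrix (Fin d) (Fin 0) ℝ)‖ := congrArg _ this
      _ = 0 := norm_zero
    rw [h0]
    exact norm_nonneg _
  have e1 : ‖M‖ = ‖diagDec d n sd.s‖ := by
    conv_lhs => rw [sd.eq]
    rw [norm_conj _ _ _ sd.orthU sd.orthV]
  have e2 : ‖sd.trunc k‖ = ‖diagTrunc d n sd.s k‖ := by
    rw [SVDData.trunc, norm_conj _ _ _ sd.orthU sd.orthV]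
  rw [e1, e2]
  exact le_trans (norm_diag_le_s0 d n sd.s sd.nonneg sd.anti)
    (norm_trunc_ge_s0 hd hn hk sd.s sd.nonneg)

lemma norm_residual_le {d n k : ℕ} {M : Matrix (Fin d) (Fin n) ℝ} (sd : SVDData d n M) :
    ‖M - sd.trunc k‖ ≤ sd.s k := by
  have h : M - sd.trunc k = sd.U * (diagDec d n sd.s - diagTrunc d n sd.s k) * sd.Vᵀ := by
    nth_rewrite 1 [sd.eq]
    rw [SVDData.trunc, Matrix.mul_sub, Matrix.sub_mul]
  rw [h, norm_conj _ _ _ sd.orthU sd.orthV]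
  exact norm_diag_sub_trunc_le d n sd.s k sd.nonneg sd.anti

theorem achlioptas_mcsherry_spectral'
    {d n : ℕ} (A N Ahat : Matrix (Fin d) (Fin n) ℝ) (hAhat : Ahat = A + N)
    (k : ℕ) (hk : 1 ≤ k)
    (sA : SVDData d n A) (sN : SVDData d n N) (sAhat : SVDData d n Ahat) :
    ‖A - sAhat.trunc k‖ ≤ ‖A - sA.trunc k‖ + 2 * ‖sN.trunc k‖ := by
  by_cases hdeg : d ≤ k ∨ n ≤ k
  · rw [trunc_eq_self sAhat k hdeg, hAhat]
    have h2 : A - (A + N) = -N := by abel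
    rw [h2, norm_neg]
    have h3 : ‖sN.trunc k‖ = ‖N‖ := congrArg _ (trunc_eq_self sN k hdeg)
    have h4 := norm_nonneg (A - sA.trunc k)
    have h5 := norm_nonneg N
    linarith
  · push_neg at hdeg
    obtain ⟨hdk, hnk⟩ := hdeg
    have hN : ‖N‖ ≤ ‖sN.trunc k‖ := norm_le_norm_trunc hk sN
    have key1 : ‖A - sAhat.trunc k‖ ≤ ‖N‖ + ‖Ahat - sAhat.trunc k‖ := by
      have h : A - sAhat.trunc k = (A - Ahat) + (Ahat - sAhat.trunc k) := by abel
      rw [h]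
      refine le_trans (norm_add_le _ _) ?_
      have h2 : A - Ahat = -N := by rw [hAhat]; abel
      rw [h2, norm_neg]
    have key2 : ‖Ahat - sAhat.trunc k‖ ≤ sAhat.s k := norm_residual_le sAhat
    have key3 : sAhat.s k ≤ ‖Ahat - sA.trunc k‖ :=
      eckart_young_lower hdk hnk sAhat (sA.trunc k) (rank_trunc_le sA k)
    have key4 : ‖Ahat - sA.trunc k‖ ≤ ‖A - sA.trunc k‖ + ‖N‖ := by
      have h : Ahat - sA.trunc k = (A - sA.trunc k) + N := by rw [hAhat]; abel
      rw [h]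
      exact norm_add_le _ _
    linarith

/-- Achlioptas–McSherry, spectral-norm version: for real d×n matrices A, N with Â = A + N and
every k ≥ 1 (M_k denoting the truncated SVD of M, for any SVDs of Â, A and N):
‖A − Â_k‖₂ ≤ ‖A − A_k‖₂ + 2‖N_k‖₂. -/
theorem achlioptas_mcsherry_spectral
    {d n : ℕ} (A N Ahat : Matrix (Fin d) (Fin n) ℝ) (hAhat : Ahat = A + N)
    (k : ℕ) (hk : 1 ≤ k)
    (sA : SVDData d n A) (sN : SVDData d n N) (sAhat : SVDData d n Ahat) :
    specNorm (A - sAhat.trunc k) ≤ specNorm (A - sA.trunc k) + 2 * specNorm (sN.trunc k) := by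
  exact achlioptas_mcsherry_spectral' A N Ahat hAhat k hk sA sN sAhat
end

section
/- Let A and N be real d×n matrices and write Â = A + N. Then for every k ≥ 1: ‖A − Â_k‖_F ≤ ‖A − A_k‖_F + ‖N_k‖_F + 2·sqrt(‖N_k‖_F·‖A_k‖_F), where M_k denotes the best rank-k approximation of a matrix M. -/
open Matrix

namespace AM

noncomputable def ip {p q : ℕ} (X Y : Matrix (Fin p) (Fin q) ℝ) : ℝ := Matrix.trace (Xᵀ * Y)

variable {p q : ℕ}

lemma ip_eq_sum (X Y : Matrix (Fin p) (Fin q) ℝ) : ip X Y = ∑ i, ∑ j, X i j * Y i j := by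
  rw [ip, Matrix.trace]
  simp only [Matrix.diag_apply, Matrix.mul_apply, Matrix.transpose_apply]
  exact Finset.sum_comm

lemma ip_eq_sum' (X Y : Matrix (Fin p) (Fin q) ℝ) : ip X Y = ∑ j, ∑ i, X i j * Y i j := by
  rw [ip_eq_sum]; exact Finset.sum_comm

lemma ip_comm (X Y : Matrix (Fin p) (Fin q) ℝ) : ip X Y = ip Y X := by
  simp [ip_eq_sum, mul_comm]

lemma ip_add_right (X Y Z : Matrix (Fin p) (Fin q) ℝ) : ip X (Y + Z) = ip X Y + ip X Z := by
  simp [ip, Matrix.mul_add]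

lemma ip_sub_left (X Y Z : Matrix (Fin p) (Fin q) ℝ) : ip (X - Y) Z = ip X Z - ip Y Z := by
  simp [ip, Matrix.sub_mul, Matrix.transpose_sub]

lemma ip_sub_right (X Y Z : Matrix (Fin p) (Fin q) ℝ) : ip X (Y - Z) = ip X Y - ip X Z := by
  simp [ip, Matrix.mul_sub]

lemma ip_self_nonneg (X : Matrix (Fin p) (Fin q) ℝ) : 0 ≤ ip X X := by
  rw [ip_eq_sum]
  exact Finset.sum_nonneg fun i _ => Finset.sum_nonneg fun j _ => mul_self_nonneg _

lemma ip_mul_left (P : Matrix (Fin p) (Fin p) ℝ) (X Y : Matrix (Fin p) (Fin q) ℝ) :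
    ip (P * X) Y = ip X (Pᵀ * Y) := by
  rw [ip, ip, Matrix.transpose_mul, Matrix.mul_assoc]

lemma ip_mul_right (Q : Matrix (Fin q) (Fin q) ℝ) (X Y : Matrix (Fin p) (Fin q) ℝ) :
    ip (X * Q) Y = ip X (Y * Qᵀ) := by
  rw [ip, ip, Matrix.transpose_mul, Matrix.mul_assoc, Matrix.trace_mul_comm, Matrix.mul_assoc]

lemma ip_conj {U : Matrix (Fin p) (Fin p) ℝ} {V : Matrix (Fin q) (Fin q) ℝ}
    (hU : Uᵀ * U = 1) (hV : Vᵀ * V = 1) (M M' : Matrix (Fin p) (Fin q) ℝ) :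
    ip (U * M * Vᵀ) (U * M' * Vᵀ) = ip M M' := by
  rw [ip, ip]
  have : (U * M * Vᵀ)ᵀ * (U * M' * Vᵀ) = V * (Mᵀ * M') * Vᵀ := by
    rw [Matrix.transpose_mul, Matrix.transpose_mul, Matrix.transpose_transpose]
    calc Vᵀᵀ * (Mᵀ * Uᵀ) * (U * M' * Vᵀ) = V * (Mᵀ * ((Uᵀ * U) * (M' * Vᵀ))) := by
          simp only [Matrix.transpose_transpose, Matrix.mul_assoc]
      _ = V * (Mᵀ * M') * Vᵀ := by rw [hU, Matrix.one_mul]; simp only [Matrix.mul_assoc]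
  rw [this, Matrix.trace_mul_comm, ← Matrix.mul_assoc, hV, Matrix.one_mul]

lemma frobNorm_eq_ip (M : Matrix (Fin p) (Fin q) ℝ) : frobNorm M = Real.sqrt (ip M M) := by
  rw [frobNorm, ip_eq_sum]
  congr 1
  refine Finset.sum_congr rfl fun i _ => Finset.sum_congr rfl fun j _ => ?_
  ring

lemma frob_nonneg (M : Matrix (Fin p) (Fin q) ℝ) : 0 ≤ frobNorm M := by
  rw [frobNorm_eq_ip]; exact Real.sqrt_nonneg _

lemma frob_sq (M : Matrix (Fin p) (Fin q) ℝ) : frobNorm M ^ 2 = ip M M := by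
  rw [frobNorm_eq_ip]; exact Real.sq_sqrt (ip_self_nonneg M)

lemma abs_ip_le (X Y : Matrix (Fin p) (Fin q) ℝ) : |ip X Y| ≤ frobNorm X * frobNorm Y := by
  have h2 : (ip X Y)^2 ≤ ip X X * ip Y Y := by
    rw [ip_eq_sum, ip_eq_sum, ip_eq_sum]
    rw [← Fintype.sum_prod_type (f := fun p : Fin p × Fin q => X p.1 p.2 * Y p.1 p.2),
        ← Fintype.sum_prod_type (f := fun p : Fin p × Fin q => X p.1 p.2 * X p.1 p.2),
        ← Fintype.sum_prod_type (f := fun p : Fin p × Fin q => Y p.1 p.2 * Y p.1 p.2)]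
    have := Finset.sum_mul_sq_le_sq_mul_sq Finset.univ (fun pr : Fin p × Fin q => X pr.1 pr.2)
      (fun pr : Fin p × Fin q => Y pr.1 pr.2)
    simpa [pow_two] using this
  calc |ip X Y| = Real.sqrt ((ip X Y)^2) := (Real.sqrt_sq_eq_abs _).symm
    _ ≤ Real.sqrt (ip X X * ip Y Y) := Real.sqrt_le_sqrt h2
    _ = frobNorm X * frobNorm Y := by
        rw [Real.sqrt_mul (ip_self_nonneg X), frobNorm_eq_ip, frobNorm_eq_ip]

lemma frob_add_sq (X Y : Matrix (Fin p) (Fin q) ℝ) :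
    frobNorm (X + Y) ^ 2 = frobNorm X ^ 2 + 2 * ip X Y + frobNorm Y ^ 2 := by
  rw [frob_sq, frob_sq, frob_sq]
  have : ip (X + Y) (X + Y) = ip X X + ip X Y + ip Y X + ip Y Y := by
    simp [ip, Matrix.mul_add, Matrix.add_mul, Matrix.transpose_add]; ring
  rw [this, ip_comm Y X]; ring

lemma frob_add_le (X Y : Matrix (Fin p) (Fin q) ℝ) :
    frobNorm (X + Y) ≤ frobNorm X + frobNorm Y := by
  have h1 : frobNorm (X + Y)^2 ≤ (frobNorm X + frobNorm Y)^2 := by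
    rw [frob_add_sq]
    have := (abs_ip_le X Y)
    have h2 := le_abs_self (ip X Y)
    nlinarith [frob_nonneg X, frob_nonneg Y]
  calc frobNorm (X+Y) = Real.sqrt (frobNorm (X+Y)^2) := (Real.sqrt_sq (frob_nonneg _)).symm
    _ ≤ Real.sqrt ((frobNorm X + frobNorm Y)^2) := Real.sqrt_le_sqrt h1
    _ = _ := Real.sqrt_sq (by linarith [frob_nonneg X, frob_nonneg Y])

lemma frob_sub_le (X Y : Matrix (Fin p) (Fin q) ℝ) :
    frobNorm (X - Y) ≤ frobNorm X + frobNorm Y := by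
  have hneg : frobNorm (-Y) = frobNorm Y := by
    rw [frobNorm_eq_ip, frobNorm_eq_ip]
    congr 1
    simp [ip_eq_sum]
  calc frobNorm (X - Y) = frobNorm (X + -Y) := by rw [sub_eq_add_neg]
    _ ≤ frobNorm X + frobNorm (-Y) := frob_add_le _ _
    _ = _ := by rw [hneg]

variable {d n p q : ℕ}

lemma sum_ite_nat {m : ℕ} (t : ℕ) (f : Fin m → ℝ) :
    (∑ i : Fin m, if (i : ℕ) = t then f i else 0) = if h : t < m then f ⟨t, h⟩ else 0 := by
  split_ifs with h
  · rw [Finset.sum_eq_single (⟨t, h⟩ : Fin m)]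
    · simp
    · intro b _ hb
      rw [if_neg]
      intro hb'
      exact hb (Fin.ext hb')
    · intro hmem; exact absurd (Finset.mem_univ _) hmem
  · refine Finset.sum_eq_zero fun i _ => if_neg fun hi => ?_
    exact h (hi ▸ i.isLt)

lemma diagDec_eq_trunc (s : ℕ → ℝ) : diagDec d n s = diagTrunc d n s d := by
  ext i j
  simp only [diagDec, diagTrunc, Matrix.of_apply]
  by_cases h : (i : ℕ) = (j : ℕ)
  · simp [h, show (j : ℕ) < d from h ▸ i.isLt]
  · simp [h]

lemma ip_diagTrunc_left (s : ℕ → ℝ) (k : ℕ) (Y : Matrix (Fin d) (Fin n) ℝ) :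
    ip (diagTrunc d n s k) Y
      = ∑ i : Fin d, if h : (i : ℕ) < n ∧ (i : ℕ) < k then s i * Y i ⟨i, h.1⟩ else 0 := by
  rw [ip_eq_sum]
  refine Finset.sum_congr rfl fun i _ => ?_
  have e : ∀ j : Fin n, diagTrunc d n s k i j * Y i j
      = if (j : ℕ) = (i : ℕ) then (if (i : ℕ) < k then s i * Y i j else 0) else 0 := by
    intro j
    simp only [diagTrunc, Matrix.of_apply]
    by_cases h1 : (i : ℕ) = (j : ℕ) <;> by_cases h2 : (i : ℕ) < k <;>
      simp [h1, h2, eq_comm]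
  rw [Finset.sum_congr rfl fun j _ => e j, sum_ite_nat]
  split_ifs with h1 h2 h3 h3 <;> first | rfl | (exfalso; tauto)

lemma ip_diagTrunc_left' (s : ℕ → ℝ) (k : ℕ) (Y : Matrix (Fin d) (Fin n) ℝ) :
    ip (diagTrunc d n s k) Y
      = ∑ j : Fin n, if h : (j : ℕ) < d ∧ (j : ℕ) < k then s j * Y ⟨j, h.1⟩ j else 0 := by
  rw [ip_eq_sum']
  refine Finset.sum_congr rfl fun j _ => ?_
  have e : ∀ i : Fin d, diagTrunc d n s k i j * Y i j
      = if (i : ℕ) = (j : ℕ) then (if (i : ℕ) < k then s i * Y i j else 0) else 0 := by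
    intro i
    simp only [diagTrunc, Matrix.of_apply]
    by_cases h1 : (i : ℕ) = (j : ℕ) <;> by_cases h2 : (i : ℕ) < k <;>
      simp [h1, h2]
  rw [Finset.sum_congr rfl fun i _ => e i, sum_ite_nat]
  split_ifs with h1 h2 h3 h3 <;> first | rfl | (exfalso; tauto)

lemma ip_diag_diag (s s' : ℕ → ℝ) (k₁ k₂ : ℕ) :
    ip (diagTrunc d n s k₁) (diagTrunc d n s' k₂)
      = ∑ i : Fin d, if (i : ℕ) < n ∧ (i : ℕ) < k₁ ∧ (i : ℕ) < k₂ then s i * s' i else 0 := by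
  rw [ip_diagTrunc_left]
  refine Finset.sum_congr rfl fun i _ => ?_
  by_cases h1 : (i : ℕ) < n
  · by_cases h2 : (i : ℕ) < k₁ <;> by_cases h3 : (i : ℕ) < k₂ <;>
      simp [diagTrunc, h1, h2, h3]
  · simp [h1]

lemma ip_diag_diag' (s s' : ℕ → ℝ) (k₁ k₂ : ℕ) :
    ip (diagTrunc d n s k₁) (diagTrunc d n s' k₂)
      = ∑ j : Fin n, if (j : ℕ) < d ∧ (j : ℕ) < k₁ ∧ (j : ℕ) < k₂ then s j * s' j else 0 := by
  rw [ip_diagTrunc_left']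
  refine Finset.sum_congr rfl fun j _ => ?_
  by_cases h1 : (j : ℕ) < d
  · by_cases h2 : (j : ℕ) < k₁ <;> by_cases h3 : (j : ℕ) < k₂ <;>
      simp [diagTrunc, h1, h2, h3]
  · simp [h1]

/-- the k-truncation identity projector -/
def Jmat (m k : ℕ) : Matrix (Fin m) (Fin m) ℝ := diagTrunc m m (fun _ => 1) k

lemma Jmat_transpose (m k : ℕ) : (Jmat m k)ᵀ = Jmat m k := by
  ext i j
  simp only [Jmat, diagTrunc, Matrix.transpose_apply, Matrix.of_apply]
  split_ifs with h1 h2 h2 <;> first | rfl | omega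

lemma Jmat_mul_diagTrunc (s : ℕ → ℝ) (k : ℕ) :
    Jmat d k * diagTrunc d n s k = diagTrunc d n s k := by
  ext i j
  rw [Matrix.mul_apply]
  have e : ∀ l : Fin d, Jmat d k i l * diagTrunc d n s k l j
      = if (l : ℕ) = (i : ℕ) then (if (i : ℕ) < k then diagTrunc d n s k l j else 0) else 0 := by
    intro l
    rcases eq_or_ne l i with rfl | hne
    · by_cases h2 : (l : ℕ) < k <;> simp [Jmat, diagTrunc, h2]
    · have h1 : ¬((i : ℕ) = (l : ℕ)) := fun hh => hne (Fin.ext hh.symm)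
      have h1' : ¬((l : ℕ) = (i : ℕ)) := fun hh => hne (Fin.ext hh)
      simp [Jmat, diagTrunc, h1, h1']
  rw [Finset.sum_congr rfl fun l _ => e l, sum_ite_nat]
  simp only [i.isLt, dif_pos]
  by_cases h2 : (i : ℕ) < k
  · simp [h2]
  · rw [if_neg h2]
    simp only [diagTrunc, Matrix.of_apply]
    rw [if_neg]; tauto

lemma diagTrunc_mul_Jmat (s : ℕ → ℝ) (k : ℕ) :
    diagTrunc d n s k * Jmat n k = diagTrunc d n s k := by
  ext i j
  rw [Matrix.mul_apply]
  have e : ∀ l : Fin n, diagTrunc d n s k i l * Jmat n k l j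
      = if (l : ℕ) = (j : ℕ) then (if (j : ℕ) < k then diagTrunc d n s k i l else 0) else 0 := by
    intro l
    rcases eq_or_ne l j with rfl | hne
    · by_cases h2 : (l : ℕ) < k <;> simp [Jmat, diagTrunc, h2]
    · have h1' : ¬((l : ℕ) = (j : ℕ)) := fun hh => hne (Fin.ext hh)
      simp [Jmat, diagTrunc, h1']
  rw [Finset.sum_congr rfl fun l _ => e l, sum_ite_nat]
  rw [dif_pos j.isLt]
  by_cases h2 : (j : ℕ) < k
  · rw [if_pos h2]
  · rw [if_neg h2]
    simp only [diagTrunc, Matrix.of_apply]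
    rw [if_neg]
    rintro ⟨h3, h4⟩
    exact h2 (h3 ▸ h4)

lemma Jmat_mul_Jmat (m k : ℕ) : Jmat m k * Jmat m k = Jmat m k :=
  Jmat_mul_diagTrunc _ _

lemma sum_ind {m k : ℕ} (h : k ≤ m) :
    ∑ i : Fin m, (if (i : ℕ) < k then (1 : ℝ) else 0) = k := by
  rw [Fin.sum_univ_eq_sum_range (fun i => if i < k then (1 : ℝ) else 0)]
  rw [← Finset.sum_subset (Finset.range_subset_range.mpr h)
      (fun x _ hx => by simp at hx ⊢; omega)]
  rw [Finset.sum_congr rfl (fun x hx => if_pos (Finset.mem_range.mp hx))]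
  simp

lemma trace_eq_ind (m k : ℕ) :
    Matrix.trace (Jmat m k) = ∑ i : Fin m, (if (i : ℕ) < k then (1 : ℝ) else 0) := by
  rw [Matrix.trace]
  refine Finset.sum_congr rfl fun i _ => ?_
  simp [Matrix.diag, Jmat, diagTrunc]

lemma trace_Jmat_le (m k : ℕ) : Matrix.trace (Jmat m k) ≤ (k : ℝ) := by
  rw [trace_eq_ind]
  rcases le_total k m with h | h
  · rw [sum_ind h]
  · calc ∑ i : Fin m, (if (i : ℕ) < k then (1 : ℝ) else 0)
        ≤ ∑ _i : Fin m, (1 : ℝ) := Finset.sum_le_sum fun i _ => by split_ifs <;> norm_num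
    _ = m := by simp
    _ ≤ k := by exact_mod_cast h

variable {d n p q : ℕ}

lemma weight_le {m k : ℕ} (c w : Fin m → ℝ) (hmono : ∀ i j : Fin m, i ≤ j → c j ≤ c i)
    (hc0 : ∀ i, 0 ≤ c i) (hw0 : ∀ i, 0 ≤ w i) (hw1 : ∀ i, w i ≤ 1)
    (hsum : ∑ i, w i ≤ (k : ℝ)) :
    ∑ i, c i * w i ≤ ∑ i : Fin m, if (i : ℕ) < k then c i else 0 := by
  by_cases hkm : m ≤ k
  · refine Finset.sum_le_sum fun i _ => ?_
    rw [if_pos (lt_of_lt_of_le i.isLt hkm)]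
    nlinarith [hc0 i, hw0 i, hw1 i]
  · push_neg at hkm
    set K : Fin m := ⟨k, hkm⟩ with hK
    have key : ∀ i : Fin m, c i * w i - (if (i : ℕ) < k then c i else 0)
        ≤ c K * (w i - (if (i : ℕ) < k then (1:ℝ) else 0)) := by
      intro i
      split_ifs with h
      · have hKi : c K ≤ c i := hmono i K (by rw [Fin.le_def]; show (i : ℕ) ≤ k; omega)
        nlinarith [hw1 i]
      · have hiK : c i ≤ c K := hmono K i (by rw [Fin.le_def]; show k ≤ (i : ℕ); omega)
        have := mul_le_mul_of_nonneg_right hiK (hw0 i)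
        simpa using this
    have h1 : ∑ i : Fin m, (c i * w i) - ∑ i : Fin m, (if (i : ℕ) < k then c i else 0)
        ≤ c K * (∑ i : Fin m, w i - (k : ℝ)) := by
      rw [← Finset.sum_sub_distrib]
      calc ∑ i : Fin m, (c i * w i - (if (i : ℕ) < k then c i else 0))
          ≤ ∑ i : Fin m, c K * (w i - (if (i : ℕ) < k then (1:ℝ) else 0)) :=
            Finset.sum_le_sum fun i _ => key i
        _ = c K * (∑ i : Fin m, w i - (k : ℝ)) := by
            rw [← Finset.mul_sum, Finset.sum_sub_distrib, sum_ind hkm.le]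
    nlinarith [hc0 K]

lemma weight_ge {m k : ℕ} (c w : Fin m → ℝ) (hmono : ∀ i j : Fin m, i ≤ j → c j ≤ c i)
    (hc0 : ∀ i, 0 ≤ c i) (hw0 : ∀ i, 0 ≤ w i) (hw1 : ∀ i, w i ≤ 1)
    (hsum : (m : ℝ) - k ≤ ∑ i, w i) :
    (∑ i : Fin m, if (i : ℕ) < k then 0 else c i) ≤ ∑ i, c i * w i := by
  have hle := weight_le c (fun i => 1 - w i) hmono hc0
    (fun i => by linarith [hw1 i]) (fun i => by linarith [hw0 i])
    (by rw [Finset.sum_sub_distrib]; simp; linarith)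
  have hsplit : ∑ i : Fin m, c i = (∑ i : Fin m, if (i : ℕ) < k then c i else 0)
      + ∑ i : Fin m, if (i : ℕ) < k then 0 else c i := by
    rw [← Finset.sum_add_distrib]
    refine Finset.sum_congr rfl fun i _ => by split_ifs <;> ring
  have hexp : ∑ i : Fin m, c i * (1 - w i) = ∑ i : Fin m, c i - ∑ i : Fin m, c i * w i := by
    rw [← Finset.sum_sub_distrib]
    refine Finset.sum_congr rfl fun i _ => by ring
  linarith

lemma diag_idem_mem {m : ℕ} (P : Matrix (Fin m) (Fin m) ℝ) (hs : Pᵀ = P)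
    (hi : P * P = P) (i : Fin m) : 0 ≤ P i i ∧ P i i ≤ 1 := by
  have h1 : P i i = ∑ j, P i j * P i j := by
    conv_lhs => rw [← hi]
    rw [Matrix.mul_apply]
    refine Finset.sum_congr rfl fun j _ => ?_
    have : P j i = P i j := by
      conv_lhs => rw [← hs]
      rfl
    rw [this]
  have h0 : 0 ≤ P i i := h1 ▸ Finset.sum_nonneg fun j _ => mul_self_nonneg _
  have h2 : P i i * P i i ≤ P i i := by
    conv_rhs => rw [h1]
    exact Finset.single_le_sum (f := fun j => P i j * P i j)
      (fun j _ => mul_self_nonneg _) (Finset.mem_univ i)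
  exact ⟨h0, by nlinarith⟩

lemma ip_mul_proj (X : Matrix (Fin p) (Fin q) ℝ) (S : Matrix (Fin q) (Fin q) ℝ)
    (hs : Sᵀ = S) (hi : S * S = S) : ip (X * S) (X * S) = ip X (X * S) := by
  rw [ip_mul_right, hs, Matrix.mul_assoc, hi]

lemma ip_projl (X : Matrix (Fin p) (Fin q) ℝ) (P : Matrix (Fin p) (Fin p) ℝ)
    (hs : Pᵀ = P) (hi : P * P = P) : ip (P * X) (P * X) = ip X (P * X) := by
  rw [ip_mul_left, hs, ← Matrix.mul_assoc, hi]

/-- squared Frobenius norm of the truncation -/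
lemma frob_trunc_sq {M : Matrix (Fin d) (Fin n) ℝ} (sd : SVDData d n M) (k : ℕ) :
    frobNorm (sd.trunc k) ^ 2
      = ∑ i : Fin d, if (i : ℕ) < n ∧ (i : ℕ) < k then sd.s i ^ 2 else 0 := by
  rw [frob_sq, SVDData.trunc, ip_conj sd.orthU sd.orthV, ip_diag_diag]
  refine Finset.sum_congr rfl fun i _ => ?_
  by_cases h1 : (i : ℕ) < n <;> by_cases h2 : (i : ℕ) < k <;> simp [h1, h2] <;> ring

lemma sub_trunc_eq {M : Matrix (Fin d) (Fin n) ℝ} (sd : SVDData d n M) (k : ℕ) :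
    M - sd.trunc k = sd.U * (diagDec d n sd.s - diagTrunc d n sd.s k) * sd.Vᵀ := by
  rw [Matrix.mul_sub, Matrix.sub_mul, ← sd.eq]
  rfl

lemma frob_sub_trunc_sq' {M : Matrix (Fin d) (Fin n) ℝ} (sd : SVDData d n M) (k : ℕ) :
    frobNorm (M - sd.trunc k) ^ 2
      = ∑ j : Fin n, if (j : ℕ) < d ∧ ¬ (j : ℕ) < k then sd.s j ^ 2 else 0 := by
  rw [frob_sq, sub_trunc_eq, ip_conj sd.orthU sd.orthV]
  rw [ip_sub_left, ip_sub_right, ip_sub_right, diagDec_eq_trunc,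
      ip_diag_diag' sd.s sd.s d d, ip_diag_diag' sd.s sd.s d k,
      ip_diag_diag' sd.s sd.s k d, ip_diag_diag' sd.s sd.s k k]
  rw [← Finset.sum_sub_distrib, ← Finset.sum_sub_distrib, ← Finset.sum_sub_distrib]
  refine Finset.sum_congr rfl fun j _ => ?_
  by_cases h1 : (j : ℕ) < d <;> by_cases h2 : (j : ℕ) < k <;> simp [h1, h2] <;> ring

/-- the truncation is ip-orthogonal to the remainder: ⟨M_k, M⟩ = ‖M_k‖². -/
lemma ip_trunc_self {M : Matrix (Fin d) (Fin n) ℝ} (sd : SVDData d n M) (k : ℕ) :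
    ip (sd.trunc k) M = frobNorm (sd.trunc k) ^ 2 := by
  rw [frob_trunc_sq]
  have e1 : ip (sd.trunc k) M
      = ip (sd.U * diagTrunc d n sd.s k * sd.Vᵀ) (sd.U * diagDec d n sd.s * sd.Vᵀ) := by
    rw [← sd.eq]; rfl
  rw [e1, diagDec_eq_trunc, ip_conj sd.orthU sd.orthV, ip_diag_diag]
  refine Finset.sum_congr rfl fun i _ => ?_
  have hid : (i : ℕ) < d := i.isLt
  by_cases h1 : (i : ℕ) < n <;> by_cases h2 : (i : ℕ) < k <;> simp [h1, h2, hid] <;> ring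

variable {d n : ℕ}

lemma cfun_mono {M : Matrix (Fin d) (Fin n) ℝ} (sd : SVDData d n M) :
    ∀ i j : Fin d, i ≤ j →
      (if (j : ℕ) < n then sd.s j ^ 2 else 0) ≤ (if (i : ℕ) < n then sd.s i ^ 2 else 0) := by
  intro i j hij
  have hij' : (i : ℕ) ≤ (j : ℕ) := hij
  by_cases hj : (j : ℕ) < n
  · rw [if_pos hj, if_pos (lt_of_le_of_lt hij' hj)]
    have h1 := sd.anti i j hij'
    have h2 := sd.nonneg (j : ℕ)
    nlinarith
  · rw [if_neg hj]
    split_ifs with hi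
    · positivity
    · exact le_refl _

lemma cfun_mono' {M : Matrix (Fin d) (Fin n) ℝ} (sd : SVDData d n M) :
    ∀ i j : Fin n, i ≤ j →
      (if (j : ℕ) < d then sd.s j ^ 2 else 0) ≤ (if (i : ℕ) < d then sd.s i ^ 2 else 0) := by
  intro i j hij
  have hij' : (i : ℕ) ≤ (j : ℕ) := hij
  by_cases hj : (j : ℕ) < d
  · rw [if_pos hj, if_pos (lt_of_le_of_lt hij' hj)]
    have h1 := sd.anti i j hij'
    have h2 := sd.nonneg (j : ℕ)
    nlinarith
  · rw [if_neg hj]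
    split_ifs with hi
    · positivity
    · exact le_refl _

lemma hoelder {M : Matrix (Fin d) (Fin n) ℝ} (sM : SVDData d n M) (k : ℕ)
    (Y : Matrix (Fin d) (Fin n) ℝ) (P : Matrix (Fin d) (Fin d) ℝ)
    (hPs : Pᵀ = P) (hPi : P * P = P) (htr : Matrix.trace P ≤ (k : ℝ)) (hPY : P * Y = Y) :
    |ip Y M| ≤ frobNorm Y * frobNorm (sM.trunc k) := by
  have hUU : sM.U * sM.Uᵀ = 1 := mul_eq_one_comm.mp sM.orthU
  set P' : Matrix (Fin d) (Fin d) ℝ := sM.Uᵀ * P * sM.U with hP'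
  have hP's : P'ᵀ = P' := by
    rw [hP', Matrix.transpose_mul, Matrix.transpose_mul, Matrix.transpose_transpose, hPs,
      Matrix.mul_assoc]
  have hP'i : P' * P' = P' := by
    rw [hP']
    calc (sM.Uᵀ * P * sM.U) * (sM.Uᵀ * P * sM.U)
        = sM.Uᵀ * (P * ((sM.U * sM.Uᵀ) * (P * sM.U))) := by simp only [Matrix.mul_assoc]
      _ = sM.Uᵀ * (P * (P * sM.U)) := by rw [hUU, Matrix.one_mul]
      _ = sM.Uᵀ * ((P * P) * sM.U) := by simp only [Matrix.mul_assoc]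
      _ = sM.Uᵀ * P * sM.U := by rw [hPi, Matrix.mul_assoc]
  have htr' : Matrix.trace P' = Matrix.trace P := by
    rw [hP', Matrix.trace_mul_comm, ← Matrix.mul_assoc, hUU, Matrix.one_mul]
  have hPM : sM.U * (P' * diagDec d n sM.s) * sM.Vᵀ = P * M := by
    rw [hP']
    calc sM.U * ((sM.Uᵀ * P * sM.U) * diagDec d n sM.s) * sM.Vᵀ
        = ((sM.U * sM.Uᵀ) * P) * (sM.U * diagDec d n sM.s * sM.Vᵀ) := by
          simp only [Matrix.mul_assoc]
      _ = P * (sM.U * diagDec d n sM.s * sM.Vᵀ) := by rw [hUU, Matrix.one_mul]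
      _ = P * M := by rw [← sM.eq]
  have hkey : ip (P * M) (P * M) ≤ frobNorm (sM.trunc k) ^ 2 := by
    rw [ip_projl _ _ hPs hPi]
    have e2 : ip M (P * M) = ip (diagDec d n sM.s) (P' * diagDec d n sM.s) := by
      rw [← hPM]
      calc ip M (sM.U * (P' * diagDec d n sM.s) * sM.Vᵀ)
          = ip (sM.U * diagDec d n sM.s * sM.Vᵀ)
              (sM.U * (P' * diagDec d n sM.s) * sM.Vᵀ) := by rw [← sM.eq]
        _ = _ := ip_conj sM.orthU sM.orthV _ _
    rw [e2]
    nth_rewrite 1 [diagDec_eq_trunc]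
    rw [ip_diagTrunc_left]
    have e3 : ∀ i : Fin d,
        (if h : (i : ℕ) < n ∧ (i : ℕ) < d then
            sM.s i * (P' * diagDec d n sM.s) i ⟨(i : ℕ), h.1⟩ else 0)
          = (if (i : ℕ) < n then sM.s i ^ 2 else 0) * P' i i := by
      intro i
      by_cases h1 : (i : ℕ) < n
      · rw [dif_pos ⟨h1, i.isLt⟩, if_pos h1]
        have e5 : (P' * diagDec d n sM.s) i ⟨(i : ℕ), h1⟩ = P' i i * sM.s i := by
          rw [Matrix.mul_apply]
          have e4 : ∀ l : Fin d, P' i l * diagDec d n sM.s l ⟨(i : ℕ), h1⟩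
              = if (l : ℕ) = (i : ℕ) then P' i l * sM.s l else 0 := by
            intro l
            simp only [diagDec, Matrix.of_apply]
            by_cases h5 : (l : ℕ) = (i : ℕ)
            · simp [h5]
            · simp [h5]
          rw [Finset.sum_congr rfl fun l _ => e4 l,
            sum_ite_nat (t := (i : ℕ)) (f := fun l => P' i l * sM.s l), dif_pos i.isLt]
          try simp
        rw [e5]; ring
      · rw [dif_neg (by tauto), if_neg h1, zero_mul]
    rw [Finset.sum_congr rfl fun i _ => e3 i]
    have hw := weight_le (fun i : Fin d => if (i : ℕ) < n then sM.s i ^ 2 else 0)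
      (fun i => P' i i) (cfun_mono sM)
      (fun i => by split_ifs <;> positivity)
      (fun i => (diag_idem_mem P' hP's hP'i i).1)
      (fun i => (diag_idem_mem P' hP's hP'i i).2)
      (by rw [show ∑ i : Fin d, P' i i = Matrix.trace P' from rfl, htr']; exact htr)
    refine le_trans hw ?_
    rw [frob_trunc_sq]
    refine le_of_eq (Finset.sum_congr rfl fun i _ => ?_)
    by_cases h1 : (i : ℕ) < n <;> by_cases h2 : (i : ℕ) < k <;> simp [h1, h2]
  have hfPM : frobNorm (P * M) ≤ frobNorm (sM.trunc k) := by
    rw [frobNorm_eq_ip]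
    calc Real.sqrt (ip (P * M) (P * M)) ≤ Real.sqrt (frobNorm (sM.trunc k) ^ 2) :=
        Real.sqrt_le_sqrt hkey
      _ = _ := Real.sqrt_sq (frob_nonneg _)
  calc |ip Y M| = |ip Y (P * M)| := by rw [← hPY, ip_mul_left, hPs, hPY]
    _ ≤ frobNorm Y * frobNorm (P * M) := abs_ip_le _ _
    _ ≤ frobNorm Y * frobNorm (sM.trunc k) :=
        mul_le_mul_of_nonneg_left hfPM (frob_nonneg Y)

lemma ey {M : Matrix (Fin d) (Fin n) ℝ} (sM : SVDData d n M) (k : ℕ)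
    (B : Matrix (Fin d) (Fin n) ℝ) (R : Matrix (Fin n) (Fin n) ℝ)
    (hRs : Rᵀ = R) (hRi : R * R = R) (htr : (n : ℝ) - k ≤ Matrix.trace R)
    (hBR : B * R = 0) :
    frobNorm (M - sM.trunc k) ≤ frobNorm (M - B) := by
  have hVV : sM.V * sM.Vᵀ = 1 := mul_eq_one_comm.mp sM.orthV
  set R' : Matrix (Fin n) (Fin n) ℝ := sM.Vᵀ * R * sM.V with hR'
  have hR's : R'ᵀ = R' := by
    rw [hR', Matrix.transpose_mul, Matrix.transpose_mul, Matrix.transpose_transpose, hRs,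
      Matrix.mul_assoc]
  have hR'i : R' * R' = R' := by
    rw [hR']
    calc (sM.Vᵀ * R * sM.V) * (sM.Vᵀ * R * sM.V)
        = sM.Vᵀ * (R * ((sM.V * sM.Vᵀ) * (R * sM.V))) := by simp only [Matrix.mul_assoc]
      _ = sM.Vᵀ * (R * (R * sM.V)) := by rw [hVV, Matrix.one_mul]
      _ = sM.Vᵀ * ((R * R) * sM.V) := by simp only [Matrix.mul_assoc]
      _ = sM.Vᵀ * R * sM.V := by rw [hRi, Matrix.mul_assoc]
  have htr' : Matrix.trace R' = Matrix.trace R := by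
    rw [hR', Matrix.trace_mul_comm, ← Matrix.mul_assoc, hVV, Matrix.one_mul]
  have hQs : (1 - R)ᵀ = 1 - R := by rw [Matrix.transpose_sub, Matrix.transpose_one, hRs]
  have hQi : (1 - R) * (1 - R) = 1 - R := by
    simp only [Matrix.mul_sub, Matrix.sub_mul, Matrix.mul_one, Matrix.one_mul, hRi]
    abel
  have hsplit : ip ((M - B) * R) ((M - B) * R) ≤ ip (M - B) (M - B) := by
    have h1 := ip_mul_proj (M - B) R hRs hRi
    have h2 := ip_mul_proj (M - B) (1 - R) hQs hQi
    have h3 : ip (M - B) ((M - B) * R) + ip (M - B) ((M - B) * (1 - R))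
        = ip (M - B) (M - B) := by
      rw [← ip_add_right, ← Matrix.mul_add]
      have : R + (1 - R) = (1 : Matrix (Fin n) (Fin n) ℝ) := by abel
      rw [this, Matrix.mul_one]
    nlinarith [ip_self_nonneg ((M - B) * (1 - R))]
  have hXR : (M - B) * R = M * R := by rw [Matrix.sub_mul, hBR, sub_zero]
  have hMR : sM.U * (diagDec d n sM.s * R') * sM.Vᵀ = M * R := by
    rw [hR']
    calc sM.U * (diagDec d n sM.s * (sM.Vᵀ * R * sM.V)) * sM.Vᵀ
        = (sM.U * diagDec d n sM.s * sM.Vᵀ) * (R * (sM.V * sM.Vᵀ)) := by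
          simp only [Matrix.mul_assoc]
      _ = (sM.U * diagDec d n sM.s * sM.Vᵀ) * (R * 1) := by rw [hVV]
      _ = M * R := by rw [Matrix.mul_one, ← sM.eq]
  have hval : ip (M * R) (M * R)
      = ∑ j : Fin n, (if (j : ℕ) < d then sM.s j ^ 2 else 0) * R' j j := by
    rw [ip_mul_proj M R hRs hRi]
    have e2 : ip M (M * R) = ip (diagDec d n sM.s) (diagDec d n sM.s * R') := by
      rw [← hMR]
      calc ip M (sM.U * (diagDec d n sM.s * R') * sM.Vᵀ)
          = ip (sM.U * diagDec d n sM.s * sM.Vᵀ)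
              (sM.U * (diagDec d n sM.s * R') * sM.Vᵀ) := by rw [← sM.eq]
        _ = _ := ip_conj sM.orthU sM.orthV _ _
    rw [e2]
    nth_rewrite 1 [diagDec_eq_trunc]
    rw [ip_diagTrunc_left']
    refine Finset.sum_congr rfl fun j _ => ?_
    by_cases h1 : (j : ℕ) < d
    · rw [dif_pos ⟨h1, h1⟩, if_pos h1]
      have e5 : (diagDec d n sM.s * R') ⟨(j : ℕ), h1⟩ j = sM.s j * R' j j := by
        rw [Matrix.mul_apply]
        have e4 : ∀ l : Fin n, diagDec d n sM.s ⟨(j : ℕ), h1⟩ l * R' l j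
            = if (l : ℕ) = (j : ℕ) then sM.s j * R' l j else 0 := by
          intro l
          simp only [diagDec, Matrix.of_apply]
          by_cases h5 : (l : ℕ) = (j : ℕ)
          · simp [h5]
          · simp [show ¬((j : ℕ) = (l : ℕ)) from fun hh => h5 hh.symm, h5]
        rw [Finset.sum_congr rfl fun l _ => e4 l,
          sum_ite_nat (t := (j : ℕ)) (f := fun l => sM.s j * R' l j), dif_pos j.isLt]
        try simp
      rw [e5]; ring
    · rw [dif_neg (by tauto), if_neg h1, zero_mul]
  have hlow : frobNorm (M - sM.trunc k) ^ 2 ≤ ip (M * R) (M * R) := by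
    rw [hval, frob_sub_trunc_sq']
    have hw := weight_ge (fun j : Fin n => if (j : ℕ) < d then sM.s j ^ 2 else 0)
      (fun j => R' j j) (cfun_mono' sM)
      (fun j => by split_ifs <;> positivity)
      (fun j => (diag_idem_mem R' hR's hR'i j).1)
      (fun j => (diag_idem_mem R' hR's hR'i j).2)
      (by rw [show ∑ j : Fin n, R' j j = Matrix.trace R' from rfl, htr']; exact htr)
    refine le_trans (le_of_eq ?_) hw
    refine Finset.sum_congr rfl fun j _ => ?_
    by_cases h1 : (j : ℕ) < d <;> by_cases h2 : (j : ℕ) < k <;> simp [h1, h2]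
  calc frobNorm (M - sM.trunc k) = Real.sqrt (frobNorm (M - sM.trunc k) ^ 2) :=
      (Real.sqrt_sq (frob_nonneg _)).symm
    _ ≤ Real.sqrt (ip (M - B) (M - B)) := by
        refine Real.sqrt_le_sqrt ?_
        rw [hXR] at hsplit
        linarith
    _ = frobNorm (M - B) := (frobNorm_eq_ip _).symm

variable {d n : ℕ}

lemma hoelder_trunc {M M' : Matrix (Fin d) (Fin n) ℝ} (sd : SVDData d n M)
    (sM' : SVDData d n M') (k : ℕ) :
    |ip (sd.trunc k) M'| ≤ frobNorm (sd.trunc k) * frobNorm (sM'.trunc k) := by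
  have hUU : sd.U * sd.Uᵀ = 1 := mul_eq_one_comm.mp sd.orthU
  refine hoelder sM' k (sd.trunc k) (sd.U * Jmat d k * sd.Uᵀ) ?_ ?_ ?_ ?_
  · rw [Matrix.transpose_mul, Matrix.transpose_mul, Matrix.transpose_transpose,
      Jmat_transpose, Matrix.mul_assoc]
  · calc (sd.U * Jmat d k * sd.Uᵀ) * (sd.U * Jmat d k * sd.Uᵀ)
        = sd.U * (Jmat d k * ((sd.Uᵀ * sd.U) * (Jmat d k * sd.Uᵀ))) := by
          simp only [Matrix.mul_assoc]
      _ = sd.U * (Jmat d k * (Jmat d k * sd.Uᵀ)) := by rw [sd.orthU, Matrix.one_mul]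
      _ = sd.U * ((Jmat d k * Jmat d k) * sd.Uᵀ) := by simp only [Matrix.mul_assoc]
      _ = sd.U * Jmat d k * sd.Uᵀ := by rw [Jmat_mul_Jmat, Matrix.mul_assoc]
  · rw [Matrix.trace_mul_comm, ← Matrix.mul_assoc, sd.orthU, Matrix.one_mul]
    exact trace_Jmat_le d k
  · rw [SVDData.trunc]
    calc (sd.U * Jmat d k * sd.Uᵀ) * (sd.U * diagTrunc d n sd.s k * sd.Vᵀ)
        = sd.U * (Jmat d k * ((sd.Uᵀ * sd.U) * (diagTrunc d n sd.s k * sd.Vᵀ))) := by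
          simp only [Matrix.mul_assoc]
      _ = sd.U * ((Jmat d k * diagTrunc d n sd.s k) * sd.Vᵀ) := by
          rw [sd.orthU, Matrix.one_mul]; simp only [Matrix.mul_assoc]
      _ = sd.U * diagTrunc d n sd.s k * sd.Vᵀ := by
          rw [Jmat_mul_diagTrunc, Matrix.mul_assoc]

lemma ey_trunc {M M' : Matrix (Fin d) (Fin n) ℝ} (sM : SVDData d n M)
    (sd : SVDData d n M') (k : ℕ) :
    frobNorm (M - sM.trunc k) ≤ frobNorm (M - sd.trunc k) := by
  have hJs : (1 - Jmat n k)ᵀ = 1 - Jmat n k := by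
    rw [Matrix.transpose_sub, Matrix.transpose_one, Jmat_transpose]
  have hJi : (1 - Jmat n k) * (1 - Jmat n k) = 1 - Jmat n k := by
    simp only [Matrix.mul_sub, Matrix.sub_mul, Matrix.mul_one, Matrix.one_mul,
      Jmat_mul_Jmat]
    abel
  refine ey sM k (sd.trunc k) (sd.V * (1 - Jmat n k) * sd.Vᵀ) ?_ ?_ ?_ ?_
  · rw [Matrix.transpose_mul, Matrix.transpose_mul, Matrix.transpose_transpose, hJs,
      Matrix.mul_assoc]
  · calc (sd.V * (1 - Jmat n k) * sd.Vᵀ) * (sd.V * (1 - Jmat n k) * sd.Vᵀ)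
        = sd.V * ((1 - Jmat n k) * ((sd.Vᵀ * sd.V) * ((1 - Jmat n k) * sd.Vᵀ))) := by
          simp only [Matrix.mul_assoc]
      _ = sd.V * ((1 - Jmat n k) * ((1 - Jmat n k) * sd.Vᵀ)) := by
          rw [sd.orthV, Matrix.one_mul]
      _ = sd.V * (((1 - Jmat n k) * (1 - Jmat n k)) * sd.Vᵀ) := by
          simp only [Matrix.mul_assoc]
      _ = sd.V * (1 - Jmat n k) * sd.Vᵀ := by rw [hJi, Matrix.mul_assoc]
  · rw [Matrix.trace_mul_comm, ← Matrix.mul_assoc, sd.orthV, Matrix.one_mul,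
      Matrix.trace_sub, Matrix.trace_one]
    have := trace_Jmat_le n k
    simp only [Fintype.card_fin] at *
    linarith
  · rw [SVDData.trunc]
    calc (sd.U * diagTrunc d n sd.s k * sd.Vᵀ) * (sd.V * (1 - Jmat n k) * sd.Vᵀ)
        = sd.U * (diagTrunc d n sd.s k * ((sd.Vᵀ * sd.V) * ((1 - Jmat n k) * sd.Vᵀ))) := by
          simp only [Matrix.mul_assoc]
      _ = sd.U * ((diagTrunc d n sd.s k * (1 - Jmat n k)) * sd.Vᵀ) := by
          rw [sd.orthV, Matrix.one_mul]; simp only [Matrix.mul_assoc]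
      _ = 0 := by
          have : diagTrunc d n sd.s k * (1 - Jmat n k) = 0 := by
            rw [Matrix.mul_sub, Matrix.mul_one, diagTrunc_mul_Jmat, sub_self]
          rw [this, Matrix.zero_mul, Matrix.mul_zero]

end AM

/-- Achlioptas–McSherry, Frobenius-norm version: for real d×n matrices A, N with Â = A + N and
every k ≥ 1 (M_k denoting the truncated SVD of M, for any SVDs of Â, A and N):
‖A − Â_k‖_F ≤ ‖A − A_k‖_F + ‖N_k‖_F + 2·sqrt(‖N_k‖_F·‖A_k‖_F). -/
theorem achlioptas_mcsherry_frobenius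
    {d n : ℕ} (A N Ahat : Matrix (Fin d) (Fin n) ℝ) (hAhat : Ahat = A + N)
    (k : ℕ) (hk : 1 ≤ k)
    (sA : SVDData d n A) (sN : SVDData d n N) (sAhat : SVDData d n Ahat) :
    frobNorm (A - sAhat.trunc k) ≤ frobNorm (A - sA.trunc k) + frobNorm (sN.trunc k) +
      2 * Real.sqrt (frobNorm (sN.trunc k) * frobNorm (sA.trunc k)) := by
  classical
  set a := frobNorm (A - sA.trunc k) with ha_def
  set b := frobNorm (sN.trunc k) with hb_def
  set c := frobNorm (sA.trunc k) with hc_def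
  set β := frobNorm (sAhat.trunc k) with hβ_def
  set hh := frobNorm (A - sAhat.trunc k) with hh_def
  have ha0 : 0 ≤ a := AM.frob_nonneg _
  have hb0 : 0 ≤ b := AM.frob_nonneg _
  have hc0 : 0 ≤ c := AM.frob_nonneg _
  have hβ0 : 0 ≤ β := AM.frob_nonneg _
  have hh0 : 0 ≤ hh := AM.frob_nonneg _
  -- crude triangle bound
  have hf1 : hh ≤ a + (c + β) := by
    have hdec : A - sAhat.trunc k = (A - sA.trunc k) + (sA.trunc k - sAhat.trunc k) := by
      abel
    rw [hh_def, hdec]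
    calc frobNorm ((A - sA.trunc k) + (sA.trunc k - sAhat.trunc k))
        ≤ frobNorm (A - sA.trunc k) + frobNorm (sA.trunc k - sAhat.trunc k) :=
          AM.frob_add_le _ _
      _ ≤ a + (c + β) := by
          have := AM.frob_sub_le (sA.trunc k) (sAhat.trunc k)
          rw [← ha_def]
          linarith
  -- Eckart-Young
  have hEY : frobNorm (Ahat - sAhat.trunc k) ≤ frobNorm (Ahat - sA.trunc k) :=
    AM.ey_trunc sAhat sA k
  -- expansions
  have hexp1 : frobNorm (Ahat - sAhat.trunc k) ^ 2
      = hh ^ 2 + 2 * AM.ip (A - sAhat.trunc k) N + frobNorm N ^ 2 := by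
    have e0 := congrArg (fun X : Matrix (Fin d) (Fin n) ℝ => X - sAhat.trunc k) hAhat
    have e : Ahat - sAhat.trunc k = (A - sAhat.trunc k) + N := by rw [e0]; abel
    rw [e, AM.frob_add_sq, hh_def]
  have hexp2 : frobNorm (Ahat - sA.trunc k) ^ 2
      = a ^ 2 + 2 * AM.ip (A - sA.trunc k) N + frobNorm N ^ 2 := by
    have e0 := congrArg (fun X : Matrix (Fin d) (Fin n) ℝ => X - sA.trunc k) hAhat
    have e : Ahat - sA.trunc k = (A - sA.trunc k) + N := by rw [e0]; abel
    rw [e, AM.frob_add_sq, ha_def]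
  have hsq : hh ^ 2 ≤ a ^ 2 + 2 * (AM.ip (sAhat.trunc k) N - AM.ip (sA.trunc k) N) := by
    have h2 := pow_le_pow_left₀ (AM.frob_nonneg _) hEY 2
    rw [hexp1, hexp2] at h2
    have e1 : AM.ip (A - sAhat.trunc k) N = AM.ip A N - AM.ip (sAhat.trunc k) N :=
      AM.ip_sub_left _ _ _
    have e2 : AM.ip (A - sA.trunc k) N = AM.ip A N - AM.ip (sA.trunc k) N :=
      AM.ip_sub_left _ _ _
    rw [e1, e2] at h2
    linarith
  -- Hoelder instances
  have h1 : |AM.ip (sAhat.trunc k) N| ≤ β * b := AM.hoelder_trunc sAhat sN k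
  have h2 : |AM.ip (sA.trunc k) N| ≤ c * b := AM.hoelder_trunc sA sN k
  have h3 : |AM.ip (sAhat.trunc k) A| ≤ β * c := AM.hoelder_trunc sAhat sA k
  -- β ≤ b + c
  have horth : AM.ip (sAhat.trunc k) Ahat = β ^ 2 := AM.ip_trunc_self sAhat k
  have hβbc : β ≤ b + c := by
    have hsplitip : AM.ip (sAhat.trunc k) Ahat
        = AM.ip (sAhat.trunc k) A + AM.ip (sAhat.trunc k) N := by
      have e0 := congrArg (fun X : Matrix (Fin d) (Fin n) ℝ => AM.ip (sAhat.trunc k) X) hAhat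
      rw [e0, AM.ip_add_right]
    have hb2 : β ^ 2 ≤ β * c + β * b := by
      rw [horth] at hsplitip
      have t1 := le_abs_self (AM.ip (sAhat.trunc k) A)
      have t2 := le_abs_self (AM.ip (sAhat.trunc k) N)
      linarith
    nlinarith
  -- main quadratic bound
  have hmain : hh ^ 2 ≤ a ^ 2 + 2 * b ^ 2 + 4 * b * c := by
    have t1 : AM.ip (sAhat.trunc k) N ≤ β * b := le_trans (le_abs_self _) h1
    have t2 : -(c * b) ≤ AM.ip (sA.trunc k) N := by
      have := neg_abs_le (AM.ip (sA.trunc k) N)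
      linarith
    have t3 : β * b ≤ (b + c) * b := mul_le_mul_of_nonneg_right hβbc hb0
    nlinarith
  -- finish
  have hs0 : 0 ≤ Real.sqrt (b * c) := Real.sqrt_nonneg _
  have hss : Real.sqrt (b * c) ^ 2 = b * c := Real.sq_sqrt (mul_nonneg hb0 hc0)
  rcases le_total c b with hcb | hbc
  · have hcs : c ≤ Real.sqrt (b * c) := by
      have h4 : Real.sqrt (c * c) ≤ Real.sqrt (b * c) :=
        Real.sqrt_le_sqrt (mul_le_mul_of_nonneg_right hcb hc0)
      rwa [Real.sqrt_mul_self hc0] at h4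
    linarith
  · have hbs : b ≤ Real.sqrt (b * c) := by
      have h4 : Real.sqrt (b * b) ≤ Real.sqrt (b * c) :=
        Real.sqrt_le_sqrt (mul_le_mul_of_nonneg_left hbc hb0)
      rwa [Real.sqrt_mul_self hb0] at h4
    set s := Real.sqrt (b * c) with hs_def
    have e1 : (a + b + 2 * s) ^ 2
        = a ^ 2 + b ^ 2 + 4 * s ^ 2 + 2 * (a * b) + 4 * (a * s) + 4 * (b * s) := by ring
    have e2 : b ^ 2 ≤ b * s := by
      rw [pow_two]
      exact mul_le_mul_of_nonneg_left hbs hb0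
    have e3 : 0 ≤ a * b := mul_nonneg ha0 hb0
    have e4 : 0 ≤ a * s := mul_nonneg ha0 hs0
    have e5 : 0 ≤ b * s := mul_nonneg hb0 hs0
    have hR2 : hh ^ 2 ≤ (a + b + 2 * s) ^ 2 := by
      rw [e1]
      linarith [hmain, hss]
    have hR0 : 0 ≤ a + b + 2 * s := by linarith
    calc hh = Real.sqrt (hh ^ 2) := (Real.sqrt_sq hh0).symm
      _ ≤ Real.sqrt ((a + b + 2 * s) ^ 2) := Real.sqrt_le_sqrt hR2
      _ = a + b + 2 * s := Real.sqrt_sq hR0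
end
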